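/- arXiv:2004.09613 — 4 statements merged into one kernel-verified Lean document; each statement's English description precedes it below -/
import Mathlib

section
/- Consider the (μ+1) EA with population size μ ≥ 1 and mutation probability p ∈ (0,1) on the OneMax function on {0,1}^n with uniformly random initialization, and let b = ⌊ n(1 − 1/μ) ⌋. For every target k with 1 ≤ k ≤ n, the expected number of fitness evaluations T_k until the population contains an individual of OneMax value at least k satisfies E[T_k] ≤ μ + (μ/(1−p)^n) · ( 2k − 1 − (n−k)·ln( n/(n−k+1) ) ) + (μ/(p(1−p)^{n−1})) · R, where R = k/n if k ≤ b+1, and R = (b+1)/n + (1/μ)·(H_{n−b−1} − H_{n−k}) otherwise. -/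
open MeasureTheory Finset

/-- The OneMax fitness: the number of one-bits of `x`. -/
def oneMax (n : ℕ) (x : Fin n → Bool) : ℕ :=
  (Finset.univ.filter (fun i : Fin n => x i = true)).card

/-- The `i`-th harmonic number `H_i = ∑_{l=1}^i 1/l`, with `H_0 = 0`. -/
noncomputable def harm (i : ℕ) : ℝ := ∑ j ∈ Finset.range i, 1 / ((j : ℝ) + 1)

/-- Standard bit mutation: the probability that flipping each bit of `x` independently with
probability `p` produces `y`. -/
noncomputable def sbmProb (n : ℕ) (p : ℝ) (x y : Fin n → Bool) : ℝ :=
  p ^ hammingDist x y * (1 - p) ^ (n - hammingDist x y)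

/-- Selection of the (μ+1) EA on OneMax: given the current population `X` and the offspring
`y`, the new population consists of the `μ` best among the `μ+1` individuals, ties broken
uniformly at random, preferring the offspring in the case of ties. `selProb n μ X y X'` is
the probability that the new population is `X'`: if the offspring is the unique worst
individual it is discarded, and otherwise it replaces a uniformly chosen parent of worst
fitness. -/
noncomputable def selProb (n μ : ℕ) (X : Fin μ → Fin n → Bool) (y : Fin n → Bool)
    (X' : Fin μ → Fin n → Bool) : ℝ :=
  let w : ℕ := (insert (oneMax n y) (Finset.univ.image fun i => oneMax n (X i))).min'
    (Finset.insert_nonempty _ _)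
  let W : Finset (Fin μ) := Finset.univ.filter fun i => oneMax n (X i) = w
  if W = ∅ then (if X' = X then 1 else 0)
  else (∑ i ∈ W, if X' = Function.update X i y then (1 : ℝ) else 0) / (W.card : ℝ)

/-- Transition probability of the (μ+1) EA with mutation probability `p` on OneMax:
a parent is chosen uniformly at random, an offspring is created from it by standard bit
mutation, and the new population keeps the `μ` best of the `μ+1` individuals (ties broken
randomly, preferring the offspring). -/
noncomputable def muPlusOneKernel (n μ : ℕ) (p : ℝ)
    (X X' : Fin μ → Fin n → Bool) : ℝ :=
  (1 / (μ : ℝ)) * ∑ j : Fin μ, ∑ y : Fin n → Bool,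
    sbmProb n p (X j) y * selProb n μ X y X'

/-- `x` is a time-homogeneous Markov chain on the finite state space `S` with initial
distribution `init` and transition probabilities `K`, characterized via its
finite-dimensional distributions. -/
def IsMarkovProcess {Ω S : Type*} [MeasurableSpace Ω] [MeasurableSpace S] [Fintype S]
    (μ : Measure Ω) (x : ℕ → Ω → S) (init : S → ℝ) (K : S → S → ℝ) : Prop :=
  (∀ t, Measurable (x t)) ∧
  (∀ a : S, μ {ω | x 0 ω = a} = ENNReal.ofReal (init a)) ∧
  (∀ t : ℕ, ∀ a : ℕ → S,
    μ {ω | ∀ s ≤ t + 1, x s ω = a s}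
      = μ {ω | ∀ s ≤ t, x s ω = a s} * ENNReal.ofReal (K (a t) (a (t + 1))))

/-- First time at which the process `x` reaches a state satisfying `good`
(`⊤` if this never happens). -/
noncomputable def hitTime {Ω S : Type*} (x : ℕ → Ω → S) (good : S → Prop) (ω : Ω) : ENNReal :=
  sInf {r : ENNReal | ∃ t : ℕ, r = (t : ENNReal) ∧ good (x t ω)}


section Drift

variable {Ω S : Type*} [MeasurableSpace Ω] [MeasurableSpace S] [Fintype S]
  [MeasurableSingletonClass S]
  {P : Measure Ω} [IsProbabilityMeasure P]
  {x : ℕ → Ω → S} {init : S → ℝ} {K : S → S → ℝ}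

theorem drift_bound (h : IsMarkovProcess P x init K)
    (hK0 : ∀ s s', 0 ≤ K s s')
    (good : S → Prop) (g : S → ℝ) (hg0 : ∀ s, 0 ≤ g s)
    (hdrift : ∀ s, ¬ good s → 1 + ∑ s', K s s' * g s' ≤ g s)
    (M : ℝ) (hM : ∀ s, g s ≤ M) :
    ∫⁻ ω, hitTime x good ω ∂P ≤ ENNReal.ofReal M := by
  classical
  obtain ⟨hmeas, hinit, hK⟩ := h
  have hSmeas : ∀ (A : Set S), MeasurableSet A := fun A => A.toFinite.measurableSet
  set Bad : ℕ → Set Ω := fun t => {ω | ∀ u ≤ t, ¬ good (x u ω)} with hBadDef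
  have hBadMeas : ∀ t, MeasurableSet (Bad t) := by
    intro t
    have : Bad t = ⋂ u ∈ {u : ℕ | u ≤ t}, (x u) ⁻¹' {s | ¬ good s} := by
      ext ω; simp [hBadDef]
    rw [this]
    exact MeasurableSet.biInter (Set.to_countable _) fun u _ => (hmeas u) (hSmeas _)
  -- pointwise bound of hitTime by sum of indicators
  have hpt : ∀ ω, hitTime x good ω ≤ ∑' t, (Bad t).indicator (fun _ => (1:ENNReal)) ω := by
    intro ω
    by_cases hex : ∃ t, good (x t ω)
    · set t0 := Nat.find hex with ht0
      have h1 : hitTime x good ω ≤ (t0 : ENNReal) :=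
        sInf_le ⟨t0, rfl, Nat.find_spec hex⟩
      refine h1.trans ?_
      have h2 : ∀ t ∈ Finset.range t0, (Bad t).indicator (fun _ => (1:ENNReal)) ω = 1 := by
        intro t ht
        rw [Finset.mem_range] at ht
        have : ω ∈ Bad t := fun u hu => Nat.find_min hex (lt_of_le_of_lt hu ht)
        simp [Set.indicator_of_mem this]
      calc (t0 : ENNReal) = ∑ t ∈ Finset.range t0, (Bad t).indicator (fun _ => (1:ENNReal)) ω := by
            rw [Finset.sum_congr rfl h2]; simp
        _ ≤ _ := ENNReal.sum_le_tsum _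
    · have : ∀ t, (Bad t).indicator (fun _ => (1:ENNReal)) ω = 1 := by
        intro t
        have : ω ∈ Bad t := fun u _ => fun hg => hex ⟨u, hg⟩
        simp [Set.indicator_of_mem this]
      rw [tsum_congr this]
      rw [ENNReal.tsum_const_eq_top_of_ne_zero one_ne_zero]
      exact le_top
  have hint : ∫⁻ ω, hitTime x good ω ∂P ≤ ∑' t, P (Bad t) := by
    calc ∫⁻ ω, hitTime x good ω ∂P
        ≤ ∫⁻ ω, ∑' t, (Bad t).indicator (fun _ => (1:ENNReal)) ω ∂P := lintegral_mono hpt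
      _ = ∑' t, ∫⁻ ω, (Bad t).indicator (fun _ => (1:ENNReal)) ω ∂P :=
          lintegral_tsum fun t => (measurable_const.indicator (hBadMeas t)).aemeasurable
      _ = ∑' t, P (Bad t) := by
          refine tsum_congr fun t => ?_
          rw [lintegral_indicator_const (hBadMeas t), one_mul]
  refine hint.trans ?_
  -- cylinder formula
  have cyl : ∀ (t : ℕ) (a : ℕ → S), P {ω | ∀ u ≤ t, x u ω = a u}
      = ENNReal.ofReal (init (a 0)) *
        ∏ u ∈ Finset.range t, ENNReal.ofReal (K (a u) (a (u+1))) := by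
    intro t a
    induction t with
    | zero =>
        have : {ω | ∀ u ≤ 0, x u ω = a u} = {ω | x 0 ω = a 0} := by
          ext ω
          constructor
          · intro h; exact h 0 le_rfl
          · intro h u hu; rw [Nat.le_zero.mp hu]; exact h
        rw [this, hinit (a 0)]; simp
    | succ t ih =>
        rw [hK t a, ih, Finset.prod_range_succ, mul_assoc]
  -- sets A t s
  set A : ℕ → S → Set Ω := fun t s => {ω | (∀ u ≤ t, ¬ good (x u ω)) ∧ x t ω = s} with hA
  have hAmeas : ∀ t s, MeasurableSet (A t s) := by
    intro t s
    have : A t s = Bad t ∩ (x t) ⁻¹' {s} := by ext ω; simp [hA, hBadDef, Set.mem_setOf_eq]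
    rw [this]
    exact (hBadMeas t).inter ((hmeas t) (hSmeas _))
  -- decomposition of A t s into cylinders
  have decomp : ∀ (t : ℕ) (s : S) (B : Set Ω), MeasurableSet B →
      P (A t s ∩ B) = ∑ a ∈ (Finset.univ.filter
          (fun a : Fin (t+1) → S => (∀ u, ¬ good (a u)) ∧ a ⟨t, Nat.lt_succ_self t⟩ = s)),
        P ({ω | ∀ u ≤ t, x u ω = a ⟨min u t, by omega⟩} ∩ B) := by
    intro t s B hB
    set F := (Finset.univ.filter
          (fun a : Fin (t+1) → S => (∀ u, ¬ good (a u)) ∧ a ⟨t, Nat.lt_succ_self t⟩ = s)) with hF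
    set C : (Fin (t+1) → S) → Set Ω :=
      fun a => {ω | ∀ u ≤ t, x u ω = a ⟨min u t, by omega⟩} with hC
    have hCeq : ∀ (a : Fin (t+1) → S) (ω : Ω), ω ∈ C a ↔ ∀ u : Fin (t+1), x u.val ω = a u := by
      intro a ω
      constructor
      · intro h u
        have hu : u.val ≤ t := Nat.lt_succ_iff.mp u.isLt
        have h1 := h u.val hu
        have he : (⟨u.val ⊓ t, by omega⟩ : Fin (t+1)) = u := Fin.ext (min_eq_left hu)
        rwa [he] at h1
      · intro h u hu
        simpa [min_eq_left hu] using h ⟨u, by omega⟩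
    have hunion : A t s ∩ B = ⋃ a ∈ F, (C a ∩ B) := by
      ext ω
      simp only [Set.mem_iUnion, Set.mem_inter_iff, exists_prop]
      constructor
      · rintro ⟨⟨h1, h2⟩, h3⟩
        refine ⟨fun u : Fin (t+1) => x u.val ω, ?_, ?_, h3⟩
        · rw [hF, Finset.mem_filter]
          exact ⟨Finset.mem_univ _, fun u => h1 u.val (Nat.lt_succ_iff.mp u.isLt), h2⟩
        · exact (hCeq (fun u : Fin (t+1) => x u.val ω) ω).mpr fun u => rfl
      · rintro ⟨a, haF, hωC, hωB⟩
        rw [hF, Finset.mem_filter] at haF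
        obtain ⟨-, hbad, hlast⟩ := haF
        rw [hCeq] at hωC
        refine ⟨⟨fun u hu => ?_, ?_⟩, hωB⟩
        · have := hωC ⟨u, by omega⟩
          rw [this]; exact hbad _
        · have := hωC ⟨t, Nat.lt_succ_self t⟩
          rw [this]; exact hlast
    have hdisj : (↑F : Set (Fin (t+1) → S)).PairwiseDisjoint (fun a => C a ∩ B) := by
      intro a _ a' _ hne
      refine Set.disjoint_left.mpr ?_
      rintro ω ⟨h1, -⟩ ⟨h2, -⟩
      rw [hCeq] at h1 h2
      exact hne (funext fun u => by rw [← h1 u, ← h2 u])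
    have hCmeas : ∀ a, MeasurableSet (C a ∩ B) := by
      intro a
      refine MeasurableSet.inter ?_ hB
      have : C a = ⋂ u ∈ {u : ℕ | u ≤ t}, (x u) ⁻¹' {a ⟨min u t, by omega⟩} := by
        ext ω; simp [hC]
      rw [this]
      exact MeasurableSet.biInter (Set.to_countable _) fun u _ => (hmeas u) (hSmeas _)
    rw [hunion, measure_biUnion_finset hdisj fun a _ => hCmeas a]
  -- key Markov step
  have key : ∀ (t : ℕ) (s s' : S),
      P (A t s ∩ {ω | x (t+1) ω = s'})
        = P (A t s) * ENNReal.ofReal (K s s') := by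
    intro t s s'
    have h1 := decomp t s {ω | x (t+1) ω = s'}
      (show MeasurableSet {ω | x (t+1) ω = s'} from hmeas (t+1) (hSmeas {s'}))
    have h2 := decomp t s Set.univ MeasurableSet.univ
    rw [Set.inter_univ] at h2
    rw [h1, h2, Finset.sum_mul]
    refine Finset.sum_congr rfl fun a ha => ?_
    rw [Finset.mem_filter] at ha
    obtain ⟨-, -, hlast⟩ := ha
    rw [Set.inter_univ]
    -- the cylinder extended by s'
    set a2 : ℕ → S := fun u => if h : u ≤ t then a ⟨min u t, by omega⟩ else s' with ha2
    have ha2le : ∀ u, u ≤ t → a2 u = a ⟨min u t, by omega⟩ := fun u hu => dif_pos hu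
    have ha2gt : ∀ u, ¬ (u ≤ t) → a2 u = s' := fun u hu => dif_neg hu
    have e1 : {ω | ∀ u ≤ t, x u ω = a ⟨min u t, by omega⟩} ∩ {ω | x (t+1) ω = s'}
        = {ω | ∀ u ≤ t+1, x u ω = a2 u} := by
      ext ω
      simp only [Set.mem_inter_iff, Set.mem_setOf_eq]
      constructor
      · rintro ⟨hc, hb⟩ u hu
        by_cases h : u ≤ t
        · rw [ha2le u h]; exact hc u h
        · have hu1 : u = t + 1 := by omega
          rw [ha2gt u h, hu1]; exact hb
      · intro h
        constructor
        · intro u hu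
          have h2 := h u (by omega)
          rwa [ha2le u hu] at h2
        · have h2 := h (t+1) le_rfl
          rwa [ha2gt (t+1) (by omega)] at h2
    have e2 : {ω | ∀ u ≤ t, x u ω = a ⟨min u t, by omega⟩} = {ω | ∀ u ≤ t, x u ω = a2 u} := by
      ext ω
      refine forall_congr' fun u => ?_
      refine imp_congr_right fun hu => ?_
      rw [ha2le u hu]
    rw [e1, e2, hK t a2]
    have ht1 : a2 t = s := by
      rw [ha2le t le_rfl, ← hlast]
      congr 1
      exact Fin.ext (by simp)
    have ht2 : a2 (t+1) = s' := ha2gt (t+1) (by omega)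
    rw [ht1, ht2]
  -- P (Bad t) as a sum
  have hPBad : ∀ t, P (Bad t) = ∑ s, P (A t s) := by
    intro t
    have hu2 : Bad t = ⋃ s ∈ (Finset.univ : Finset S), A t s := by
      ext ω
      simp only [Set.mem_iUnion, exists_prop]
      constructor
      · intro h; exact ⟨x t ω, Finset.mem_univ _, h, rfl⟩
      · rintro ⟨s, -, h, -⟩; exact h
    rw [hu2, measure_biUnion_finset ?_ fun s _ => hAmeas t s]
    · intro s1 _ s2 _ hne
      refine Set.disjoint_left.mpr ?_
      rintro ω ⟨-, h1⟩ ⟨-, h2⟩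
      exact hne (h1 ▸ h2 ▸ rfl)
  have hq0 : ∀ t s, good s → P (A t s) = 0 := by
    intro t s hs
    have : A t s = ∅ := by
      ext ω
      simp only [hA, Set.mem_setOf_eq, Set.mem_empty_iff_false, iff_false, not_and]
      intro h1 h2
      exact h1 t le_rfl (h2 ▸ hs)
    rw [this, measure_empty]
  have hrec : ∀ t s', P (A (t+1) s')
      = if good s' then 0 else ∑ s, P (A t s) * ENNReal.ofReal (K s s') := by
    intro t s'
    by_cases hgs : good s'
    · rw [if_pos hgs, hq0 _ _ hgs]
    · rw [if_neg hgs]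
      have hu3 : A (t+1) s' = ⋃ s ∈ (Finset.univ : Finset S), (A t s ∩ {ω | x (t+1) ω = s'}) := by
        ext ω
        simp only [Set.mem_iUnion, exists_prop, hA, Set.mem_inter_iff, Set.mem_setOf_eq]
        constructor
        · rintro ⟨h1, h2⟩
          exact ⟨x t ω, Finset.mem_univ _, ⟨fun u hu => h1 u (by omega), rfl⟩, h2⟩
        · rintro ⟨s, -, ⟨h1, -⟩, h2⟩
          refine ⟨fun u hu => ?_, h2⟩
          rcases Nat.lt_succ_iff_lt_or_eq.mp (Nat.lt_succ_of_le hu) with h | h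
          · exact h1 u (by omega)
          · rw [h, h2]; exact hgs
      rw [hu3, measure_biUnion_finset ?_ fun s _ => (hAmeas t s).inter
        (show MeasurableSet {ω | x (t+1) ω = s'} from hmeas (t+1) (hSmeas {s'}))]
      · exact Finset.sum_congr rfl fun s _ => key t s s'
      · intro s1 _ s2 _ hne
        refine Set.disjoint_left.mpr ?_
        rintro ω ⟨⟨-, h1⟩, -⟩ ⟨⟨-, h2⟩, -⟩
        exact hne (h1 ▸ h2 ▸ rfl)
  -- the potential
  set φ : ℕ → ENNReal := fun t => ∑ s, P (A t s) * ENNReal.ofReal (g s) with hφ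
  have f4 : ∀ t, P (Bad t) + φ (t+1) ≤ φ t := by
    intro t
    have step1 : φ (t+1) ≤ ∑ s, P (A t s) * ∑ s',
        ENNReal.ofReal (K s s') * ENNReal.ofReal (g s') := by
      rw [hφ]
      calc ∑ s', P (A (t+1) s') * ENNReal.ofReal (g s')
          ≤ ∑ s', (∑ s, P (A t s) * ENNReal.ofReal (K s s')) * ENNReal.ofReal (g s') := by
            refine Finset.sum_le_sum fun s' _ => ?_
            rw [hrec t s']
            by_cases hgs : good s'
            · rw [if_pos hgs, zero_mul]; exact zero_le
            · rw [if_neg hgs]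
        _ = ∑ s', ∑ s, P (A t s) * (ENNReal.ofReal (K s s') * ENNReal.ofReal (g s')) := by
            refine Finset.sum_congr rfl fun s' _ => ?_
            rw [Finset.sum_mul]
            refine Finset.sum_congr rfl fun s _ => by rw [mul_assoc]
        _ = ∑ s, P (A t s) * ∑ s', ENNReal.ofReal (K s s') * ENNReal.ofReal (g s') := by
            rw [Finset.sum_comm]
            exact Finset.sum_congr rfl fun s _ => by rw [Finset.mul_sum]
    calc P (Bad t) + φ (t+1)
        ≤ ∑ s, P (A t s) + ∑ s, P (A t s) * ∑ s',
            ENNReal.ofReal (K s s') * ENNReal.ofReal (g s') := by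
          rw [hPBad t]; exact add_le_add_right step1 _
      _ = ∑ s, P (A t s) * (1 + ∑ s', ENNReal.ofReal (K s s') * ENNReal.ofReal (g s')) := by
          rw [← Finset.sum_add_distrib]
          exact Finset.sum_congr rfl fun s _ => by rw [mul_add, mul_one]
      _ ≤ φ t := by
          rw [hφ]
          refine Finset.sum_le_sum fun s _ => ?_
          by_cases hgs : good s
          · rw [hq0 t s hgs, zero_mul, zero_mul]
          · refine mul_le_mul_right ?_ _
            have e3 : (1 : ENNReal) + ∑ s', ENNReal.ofReal (K s s') * ENNReal.ofReal (g s')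
                = ENNReal.ofReal (1 + ∑ s', K s s' * g s') := by
              rw [ENNReal.ofReal_add zero_le_one (Finset.sum_nonneg fun s' _ =>
                mul_nonneg (hK0 s s') (hg0 s')), ENNReal.ofReal_one,
                ENNReal.ofReal_sum_of_nonneg fun s' _ => mul_nonneg (hK0 s s') (hg0 s')]
              congr 1
              exact Finset.sum_congr rfl fun s' _ => (ENNReal.ofReal_mul (hK0 s s')).symm
            rw [e3]
            exact ENNReal.ofReal_le_ofReal (hdrift s hgs)
  have f5 : ∀ T, ∑ t ∈ Finset.range T, P (Bad t) ≤ φ 0 := by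
    have f5' : ∀ T, ∑ t ∈ Finset.range T, P (Bad t) + φ T ≤ φ 0 := by
      intro T
      induction T with
      | zero => simp
      | succ T ih =>
          rw [Finset.sum_range_succ, add_assoc]
          exact le_trans (add_le_add_right (f4 T) _) ih
    exact fun T => le_trans (le_add_right le_rfl) (f5' T)
  have f6 : φ 0 ≤ ENNReal.ofReal M := by
    rw [hφ]
    calc ∑ s, P (A 0 s) * ENNReal.ofReal (g s)
        ≤ ∑ s, P (A 0 s) * ENNReal.ofReal M :=
          Finset.sum_le_sum fun s _ => mul_le_mul_right (ENNReal.ofReal_le_ofReal (hM s)) _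
      _ = (∑ s, P (A 0 s)) * ENNReal.ofReal M := by rw [Finset.sum_mul]
      _ = P (Bad 0) * ENNReal.ofReal M := by rw [hPBad 0]
      _ ≤ 1 * ENNReal.ofReal M := mul_le_mul_left prob_le_one _
      _ = ENNReal.ofReal M := one_mul _
  refine ENNReal.summable.tsum_le_of_sum_le fun s => ?_
  refine le_trans ?_ (le_trans (f5 (s.sup id + 1)) f6)
  refine Finset.sum_le_sum_of_subset fun t ht => ?_
  rw [Finset.mem_range]
  exact Nat.lt_succ_of_le (Finset.le_sup (f := id) ht)

end Drift


namespace EA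

/-- target number of copies at level `l` -/
def cstar (n μ l : ℕ) : ℕ := min μ ((n + (n - l) - 1) / (n - l))

noncomputable def Impr (n μ : ℕ) (p : ℝ) (l : ℕ) : ℝ :=
  (μ:ℝ) / ((cstar n μ l : ℝ) * ((n - l : ℕ) : ℝ) * p * (1-p)^(n-1))

noncomputable def trm (n μ : ℕ) (p : ℝ) (l : ℕ) : ℝ :=
  (μ:ℝ)/(1-p)^n * harm (cstar n μ l - 1) + Impr n μ p l

noncomputable def Tail (n μ k : ℕ) (p : ℝ) (i : ℕ) : ℝ := ∑ l ∈ Finset.Ico i k, trm n μ p l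

noncomputable def Gpot (n μ k : ℕ) (p : ℝ) (i c : ℕ) : ℝ :=
  if k ≤ i then 0 else
    (μ:ℝ)/(1-p)^n * (harm (cstar n μ i - 1) - harm (min c (cstar n μ i) - 1))
      + Impr n μ p i + Tail n μ k p (i+1)

/-! ### harmonic numbers -/

lemma harm_succ (m : ℕ) : harm (m+1) = harm m + 1/((m:ℝ)+1) := by
  simp [harm, Finset.sum_range_succ]

lemma harm_nonneg (m : ℕ) : 0 ≤ harm m :=
  Finset.sum_nonneg fun j _ => by positivity

lemma harm_mono {a b : ℕ} (h : a ≤ b) : harm a ≤ harm b := by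
  refine Finset.sum_le_sum_of_subset_of_nonneg ?_ fun j _ _ => by positivity
  exact Finset.range_subset_range.mpr h

lemma harm_le_one_add_log {m : ℕ} (hm : 1 ≤ m) : harm m ≤ 1 + Real.log m := by
  induction m with
  | zero => omega
  | succ m ih =>
      rcases Nat.eq_or_lt_of_le hm with h | h
      · simp [← h, harm_succ, harm]
      · have hm1 : 1 ≤ m := by omega
        have hmpos : (0:ℝ) < m := by exact_mod_cast hm1
        have hlog : 1/((m:ℝ)+1) ≤ Real.log ((m:ℝ)+1) - Real.log m := by
          have h1 : Real.log ((m:ℝ)/((m:ℝ)+1)) ≤ (m:ℝ)/((m:ℝ)+1) - 1 :=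
            Real.log_le_sub_one_of_pos (by positivity)
          rw [Real.log_div (by positivity) (by positivity)] at h1
          have h2 : (m:ℝ)/((m:ℝ)+1) - 1 = -(1/((m:ℝ)+1)) := by field_simp; ring
          rw [h2] at h1
          linarith
        have := ih hm1
        rw [harm_succ]
        push_cast
        linarith
lemma one_le_cast_add_one (m : ℕ) : (0:ℝ) < (m:ℝ) + 1 := by positivity

/-! ### cstar -/

lemma cstar_le_mu (n μ l : ℕ) : cstar n μ l ≤ μ := min_le_left _ _

lemma cstar_pos {n μ l : ℕ} (hμ : 1 ≤ μ) (hl : l < n) : 0 < cstar n μ l := by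
  have hd : 0 < n - l := by omega
  have : 0 < (n + (n - l) - 1) / (n - l) := Nat.div_pos (by omega) hd
  exact lt_min hμ this

lemma ceil_mul_ge {n l : ℕ} (hl : l < n) : n ≤ ((n + (n - l) - 1) / (n - l)) * (n - l) := by
  have hd : 0 < n - l := by omega
  have h1 := Nat.lt_div_mul_add (a := n + (n - l) - 1) hd
  omega

lemma cstar_mul {n μ l : ℕ} (hl : l < n) (hmul : n ≤ μ * (n - l)) :
    n ≤ cstar n μ l * (n - l) := by
  rcases min_cases μ ((n + (n - l) - 1) / (n - l)) with ⟨h, _⟩ | ⟨h, _⟩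
  · rw [cstar, h]; exact hmul
  · rw [cstar, h]; exact ceil_mul_ge hl

lemma cstar_eq_mu {n μ l : ℕ} (hl : l < n) (hmul : μ * (n - l) < n) : cstar n μ l = μ := by
  have hd : 0 < n - l := by omega
  have : μ ≤ (n + (n - l) - 1) / (n - l) := by
    rw [Nat.le_div_iff_mul_le hd]
    omega
  exact min_eq_left this

lemma cstar_sub_one_le {n μ l : ℕ} (hn : 1 ≤ n) (hl : l < n) :
    ((cstar n μ l - 1 : ℕ) : ℝ) ≤ (n : ℝ) / ((n - l : ℕ) : ℝ) := by
  have hd : 0 < n - l := by omega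
  have h1 : cstar n μ l - 1 ≤ (n - 1) / (n - l) := by
    have h2 : cstar n μ l ≤ (n + (n - l) - 1) / (n - l) := min_le_right _ _
    have h3 : (n + (n - l) - 1) / (n - l) = (n - 1) / (n - l) + 1 := by
      have : n + (n - l) - 1 = (n - 1) + (n - l) := by omega
      rw [this, Nat.add_div_right _ hd]
    rw [h3] at h2
    exact Nat.sub_le_iff_le_add.mpr h2
  calc ((cstar n μ l - 1 : ℕ) : ℝ) ≤ (((n-1)/(n-l) : ℕ) : ℝ) := by exact_mod_cast h1
    _ ≤ ((n-1 : ℕ) : ℝ) / ((n - l : ℕ) : ℝ) := Nat.cast_div_le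
    _ ≤ (n : ℝ) / ((n - l : ℕ) : ℝ) := by
        have hd' : (0:ℝ) < ((n - l : ℕ) : ℝ) := by exact_mod_cast hd
        have hle : ((n-1 : ℕ) : ℝ) ≤ (n : ℝ) := by exact_mod_cast Nat.sub_le n 1
        gcongr

lemma cstar_zero {n μ : ℕ} (hn : 1 ≤ n) (hμ : 1 ≤ μ) : cstar n μ 0 = 1 := by
  have h1 : (n + (n - 0) - 1) / (n - 0) = 1 := by
    simp only [Nat.sub_zero]
    exact Nat.div_eq_of_lt_le (by omega) (by omega)
  rw [cstar, h1]
  omega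

/-! ### floor facts -/

lemma floor_le_mul {n μ b l : ℕ} (hμ : 1 ≤ μ) (hb : b = ⌊(n : ℝ) * (1 - 1 / (μ : ℝ))⌋₊)
    (hl : l ≤ b) : n ≤ μ * (n - l) := by
  have hμR : (1:ℝ) ≤ (μ:ℝ) := by exact_mod_cast hμ
  have hμ0 : (0:ℝ) < (μ:ℝ) := by linarith
  have hfrac : 1/(μ:ℝ) ≤ 1 := by rw [div_le_one hμ0]; exact hμR
  have hfrac0 : 0 < 1/(μ:ℝ) := by positivity
  have hn0 : (0:ℝ) ≤ (n:ℝ) := Nat.cast_nonneg n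
  have h0 : (0:ℝ) ≤ (n : ℝ) * (1 - 1/(μ:ℝ)) := by nlinarith
  have h1 : (l:ℝ) ≤ (n : ℝ) * (1 - 1/(μ:ℝ)) := by
    calc (l:ℝ) ≤ (b:ℝ) := by exact_mod_cast hl
      _ ≤ _ := by rw [hb]; exact Nat.floor_le h0
  have hln : l ≤ n := by
    have h2 : (n:ℝ)*(1-1/(μ:ℝ)) ≤ n := by nlinarith
    have : (l:ℝ) ≤ (n:ℝ) := le_trans h1 h2
    exact_mod_cast this
  have h2 : (n:ℝ) ≤ (μ:ℝ) * ((n:ℝ) - (l:ℝ)) := by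
    have h3 := mul_le_mul_of_nonneg_left h1 (le_of_lt hμ0)
    have he : (μ:ℝ) * ((n : ℝ) * (1 - 1/(μ:ℝ))) = (μ:ℝ)*(n:ℝ) - (n:ℝ) := by
      field_simp
    nlinarith
  have h3 : ((n:ℕ):ℝ) ≤ ((μ * (n - l) : ℕ) : ℝ) := by
    push_cast [Nat.cast_sub hln]
    linarith
  exact_mod_cast h3

lemma mul_lt_of_gt_b {n μ b l : ℕ} (hμ : 1 ≤ μ) (hb : b = ⌊(n : ℝ) * (1 - 1 / (μ : ℝ))⌋₊)
    (hl : b + 1 ≤ l) (hln : l ≤ n) : μ * (n - l) < n := by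
  have hμ0 : (0:ℝ) < (μ:ℝ) := by exact_mod_cast hμ
  have h1 : (n : ℝ) * (1 - 1/(μ:ℝ)) < (l:ℝ) := by
    calc (n : ℝ) * (1 - 1/(μ:ℝ)) < (b:ℝ) + 1 := by rw [hb]; exact Nat.lt_floor_add_one _
      _ ≤ (l:ℝ) := by exact_mod_cast hl
  have h2 : (μ:ℝ) * ((n:ℝ) - (l:ℝ)) < (n:ℝ) := by
    have h3 := mul_lt_mul_of_pos_left h1 hμ0
    have he : (μ:ℝ) * ((n : ℝ) * (1 - 1/(μ:ℝ))) = (μ:ℝ)*(n:ℝ) - (n:ℝ) := by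
      field_simp
    nlinarith
  have h3 : ((μ * (n - l) : ℕ) : ℝ) < ((n:ℕ):ℝ) := by
    push_cast [Nat.cast_sub hln]
    linarith
  exact_mod_cast h3

/-! ### potential function lemmas -/

section Pot
variable {n μ k : ℕ} {p : ℝ}

lemma Impr_nonneg (hp0 : 0 < p) (hp1 : p < 1) (l : ℕ) : 0 ≤ Impr n μ p l := by
  have hq : (0:ℝ) < 1 - p := by linarith
  unfold Impr
  apply div_nonneg (Nat.cast_nonneg μ)
  have h1 : (0:ℝ) ≤ (cstar n μ l : ℝ) := Nat.cast_nonneg _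
  have h2 : (0:ℝ) ≤ ((n - l : ℕ) : ℝ) := Nat.cast_nonneg _
  positivity

lemma trm_nonneg (hp0 : 0 < p) (hp1 : p < 1) (l : ℕ) : 0 ≤ trm n μ p l := by
  have hq : (0:ℝ) < 1 - p := by linarith
  have h1 : (0:ℝ) ≤ (μ:ℝ)/(1-p)^n * harm (cstar n μ l - 1) := by
    apply mul_nonneg _ (harm_nonneg _)
    positivity
  have h2 := Impr_nonneg (n := n) (μ := μ) hp0 hp1 l
  unfold trm
  linarith

lemma Tail_nonneg (hp0 : 0 < p) (hp1 : p < 1) (i : ℕ) : 0 ≤ Tail n μ k p i :=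
  Finset.sum_nonneg fun l _ => trm_nonneg hp0 hp1 l

lemma Tail_anti (hp0 : 0 < p) (hp1 : p < 1) {i i' : ℕ} (h : i ≤ i') :
    Tail n μ k p i' ≤ Tail n μ k p i := by
  apply Finset.sum_le_sum_of_subset_of_nonneg
  · exact Finset.Ico_subset_Ico h le_rfl
  · exact fun l _ _ => trm_nonneg hp0 hp1 l

lemma Gpot_nonneg (hp0 : 0 < p) (hp1 : p < 1) (i c : ℕ) : 0 ≤ Gpot n μ k p i c := by
  have hq : (0:ℝ) < 1 - p := by linarith
  unfold Gpot
  split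
  · exact le_refl 0
  · have h1 : 0 ≤ (μ:ℝ)/(1-p)^n * (harm (cstar n μ i - 1) - harm (min c (cstar n μ i) - 1)) := by
      apply mul_nonneg (by positivity)
      have := harm_mono (Nat.sub_le_sub_right (min_le_right c (cstar n μ i)) 1)
      linarith
    have h2 := Impr_nonneg (n := n) (μ := μ) hp0 hp1 i
    have h3 := Tail_nonneg (n := n) (μ := μ) (k := k) hp0 hp1 (i+1)
    linarith

lemma Gpot_le_Tail (hp0 : 0 < p) (hp1 : p < 1) (i c : ℕ) :
    Gpot n μ k p i c ≤ Tail n μ k p i := by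
  have hq : (0:ℝ) < 1 - p := by linarith
  unfold Gpot
  split
  · exact Tail_nonneg hp0 hp1 i
  · rename_i hik
    push_neg at hik
    have hsplit : Tail n μ k p i = trm n μ p i + Tail n μ k p (i+1) := by
      unfold Tail
      exact Finset.sum_eq_sum_Ico_succ_bot hik _
    rw [hsplit]
    unfold trm
    have h1 : (μ:ℝ)/(1-p)^n * (harm (cstar n μ i - 1) - harm (min c (cstar n μ i) - 1))
        ≤ (μ:ℝ)/(1-p)^n * harm (cstar n μ i - 1) := by
      apply mul_le_mul_of_nonneg_left _ (by positivity)
      have := harm_nonneg (min c (cstar n μ i) - 1)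
      linarith
    linarith

lemma Gpot_anti (hp0 : 0 < p) (hp1 : p < 1) (i : ℕ) {c c' : ℕ} (h : c ≤ c') :
    Gpot n μ k p i c' ≤ Gpot n μ k p i c := by
  have hq : (0:ℝ) < 1 - p := by linarith
  unfold Gpot
  split
  · exact le_refl 0
  · have h1 : harm (min c (cstar n μ i) - 1) ≤ harm (min c' (cstar n μ i) - 1) :=
      harm_mono (Nat.sub_le_sub_right (min_le_min_right _ h) 1)
    have h2 : (μ:ℝ)/(1-p)^n * (harm (cstar n μ i - 1) - harm (min c' (cstar n μ i) - 1))
        ≤ (μ:ℝ)/(1-p)^n * (harm (cstar n μ i - 1) - harm (min c (cstar n μ i) - 1)) := by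
      apply mul_le_mul_of_nonneg_left _ (by positivity)
      linarith
    linarith

lemma Gpot_clone (hp0 : 0 < p) (hp1 : p < 1) {i c : ℕ} (hik : i < k) (hc1 : 1 ≤ c)
    (hc : c < cstar n μ i) :
    Gpot n μ k p i (c+1) + (μ:ℝ)/((1-p)^n * (c:ℝ)) ≤ Gpot n μ k p i c := by
  have hq : (0:ℝ) < 1 - p := by linarith
  have hc0 : (0:ℝ) < (c:ℝ) := by exact_mod_cast hc1
  have hmin1 : min (c+1) (cstar n μ i) = c + 1 := min_eq_left hc
  have hmin2 : min c (cstar n μ i) = c := min_eq_left hc.le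
  rw [Gpot, if_neg (by omega), Gpot, if_neg (by omega), hmin1, hmin2]
  have hh : harm ((c+1)-1) = harm (c - 1) + 1/(c:ℝ) := by
    have h1 : (c+1) - 1 = (c-1) + 1 := by omega
    rw [h1, harm_succ]
    congr 1
    rw [Nat.cast_sub hc1]
    push_cast
    ring
  rw [Nat.add_sub_cancel] at hh ⊢
  rw [hh]
  have key : (μ:ℝ)/(1-p)^n * (1/(c:ℝ)) = (μ:ℝ)/((1-p)^n * (c:ℝ)) := by
    rw [div_mul_div_comm, mul_one]
  nlinarith [key]

lemma Gpot_improve (hp0 : 0 < p) (hp1 : p < 1) {i : ℕ} (c : ℕ) (hik : i < k) :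
    Impr n μ p i + Tail n μ k p (i+1) ≤ Gpot n μ k p i c := by
  have hq : (0:ℝ) < 1 - p := by linarith
  rw [Gpot, if_neg (by omega)]
  have h1 : 0 ≤ (μ:ℝ)/(1-p)^n * (harm (cstar n μ i - 1) - harm (min c (cstar n μ i) - 1)) := by
    apply mul_nonneg (by positivity)
    have := harm_mono (Nat.sub_le_sub_right (min_le_right c (cstar n μ i)) 1)
    linarith
  linarith

end Pot

/-! ### sum estimates -/

lemma harm_cstar_le {n μ l : ℕ} (hn : 1 ≤ n) (hl : l < n) :
    harm (cstar n μ l - 1) ≤ 1 + Real.log ((n:ℝ)/((n - l : ℕ):ℝ)) := by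
  have hd : 0 < n - l := by omega
  have hd0 : (0:ℝ) < ((n - l : ℕ):ℝ) := by exact_mod_cast hd
  have hn0 : (0:ℝ) < (n:ℝ) := by exact_mod_cast hn
  have hratio1 : (1:ℝ) ≤ (n:ℝ)/((n - l : ℕ):ℝ) := by
    rw [le_div_iff₀ hd0]
    have : n - l ≤ n := Nat.sub_le n l
    calc (1:ℝ) * ((n - l : ℕ):ℝ) = ((n - l : ℕ):ℝ) := one_mul _
      _ ≤ (n:ℝ) := by exact_mod_cast this
  have hlogr : 0 ≤ Real.log ((n:ℝ)/((n - l : ℕ):ℝ)) := Real.log_nonneg hratio1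
  rcases Nat.eq_zero_or_pos (cstar n μ l - 1) with h0 | hpos
  · rw [h0]
    have : harm 0 = 0 := by simp [harm]
    rw [this]
    linarith
  · have h1 := harm_le_one_add_log hpos
    have h2 : Real.log ((cstar n μ l - 1 : ℕ):ℝ) ≤ Real.log ((n:ℝ)/((n - l : ℕ):ℝ)) := by
      apply Real.log_le_log (by exact_mod_cast hpos)
      exact cstar_sub_one_le hn hl
    linarith

lemma logsum {n : ℕ} (hn : 1 ≤ n) : ∀ m : ℕ, m + 1 ≤ n →
    ∑ t ∈ Finset.range m, Real.log ((n:ℝ)/((n - (t+1) : ℕ):ℝ))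
      ≤ ((m:ℝ)+1) - ((n:ℝ) - ((m:ℝ)+1)) * Real.log ((n:ℝ)/((n:ℝ) - ((m:ℝ)+1) + 1)) := by
  have hn0 : (0:ℝ) < (n:ℝ) := by exact_mod_cast hn
  intro m
  induction m with
  | zero =>
      intro _
      simp only [Finset.range_zero, Finset.sum_empty, Nat.cast_zero]
      rw [show (n:ℝ) - (0+1) + 1 = (n:ℝ) by ring, div_self (ne_of_gt hn0), Real.log_one]
      norm_num
  | succ m ih =>
      intro hm
      have ihh := ih (by omega)
      rw [Finset.sum_range_succ]
      set D : ℝ := (n:ℝ) - ((m:ℝ)+1) with hD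
      have hD1 : (1:ℝ) ≤ D := by
        have : ((m:ℕ):ℝ) + 2 ≤ (n:ℝ) := by exact_mod_cast hm
        rw [hD]; linarith
      have hD0 : (0:ℝ) < D := by linarith
      have hcast : ((n - (m+1) : ℕ):ℝ) = D := by
        rw [hD, Nat.cast_sub (by omega)]
        push_cast
        ring
      have hkey : Real.log (D+1) - Real.log D ≤ 1/D := by
        have h1 : Real.log ((D+1)/D) ≤ (D+1)/D - 1 := Real.log_le_sub_one_of_pos (by positivity)
        rw [Real.log_div (by linarith) (ne_of_gt hD0)] at h1
        have h2 : (D+1)/D - 1 = 1/D := by field_simp; ring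
        linarith
      have hkey2 : D * (Real.log (D+1) - Real.log D) ≤ 1 := by
        have h4 := mul_le_mul_of_nonneg_left hkey (le_of_lt hD0)
        rw [mul_one_div, div_self (ne_of_gt hD0)] at h4
        exact h4
      rw [hcast]
      push_cast
      rw [show (n:ℝ) - ((m:ℝ)+1+1) + 1 = D by rw [hD]; ring]
      rw [show (n:ℝ) - ((m:ℝ)+1+1) = D - 1 by rw [hD]; ring]
      have hlogD : Real.log ((n:ℝ)/D) = Real.log (n:ℝ) - Real.log D :=
        Real.log_div (ne_of_gt hn0) (ne_of_gt hD0)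
      have hlogD1 : Real.log ((n:ℝ)/(D+1)) = Real.log (n:ℝ) - Real.log (D+1) :=
        Real.log_div (ne_of_gt hn0) (by linarith)
      rw [show (n:ℝ) - ((m:ℝ)+1) + 1 = D + 1 by rw [hD]] at ihh
      rw [hlogD1] at ihh
      rw [hlogD]
      nlinarith [ihh, hkey2]

lemma harm_sum_Ico {n : ℕ} : ∀ c : ℕ, ∀ a : ℕ, a ≤ c → c ≤ n →
    ∑ l ∈ Finset.Ico a c, 1/((n - l : ℕ):ℝ) = harm (n - a) - harm (n - c) := by
  intro c
  induction c with
  | zero =>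
      intro a ha _
      have : a = 0 := by omega
      simp [this]
  | succ c ih =>
      intro a ha hc
      rcases Nat.eq_or_lt_of_le ha with h | h
      · rw [h]
        simp
      · have ha' : a ≤ c := by omega
        rw [Finset.sum_Ico_succ_top ha', ih a ha' (by omega)]
        have hsucc : harm (n - c) = harm (n - (c+1)) + 1/((n - c : ℕ):ℝ) := by
          have h1 : n - c = (n - (c+1)) + 1 := by omega
          rw [h1, harm_succ]
          push_cast
          ring
        rw [hsucc]
        ring

lemma Tail_zero_le {n μ k b : ℕ} {p : ℝ} (hn : 1 ≤ n) (hμ : 1 ≤ μ)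
    (hp0 : 0 < p) (hp1 : p < 1) (hk1 : 1 ≤ k) (hkn : k ≤ n)
    (hb : b = ⌊(n : ℝ) * (1 - 1 / (μ : ℝ))⌋₊) :
    Tail n μ k p 0 ≤
      (μ : ℝ) / (1 - p) ^ n *
          (2 * (k : ℝ) - 1 - ((n : ℝ) - k) * Real.log ((n : ℝ) / ((n : ℝ) - k + 1)))
        + (μ : ℝ) / (p * (1 - p) ^ (n - 1)) *
          (if k ≤ b + 1 then (k : ℝ) / n
           else ((b : ℝ) + 1) / n + (1 / (μ : ℝ)) * (harm (n - b - 1) - harm (n - k))) := by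
  have hq : (0:ℝ) < 1 - p := by linarith
  have hn0 : (0:ℝ) < (n:ℝ) := by exact_mod_cast hn
  have hμ0 : (0:ℝ) < (μ:ℝ) := by exact_mod_cast hμ
  have hPB : (0:ℝ) < p * (1-p)^(n-1) := by positivity
  have hA : (0:ℝ) ≤ (μ:ℝ)/(1-p)^n := by positivity
  -- split Tail into the two sums
  have hTail : Tail n μ k p 0 = (μ:ℝ)/(1-p)^n * (∑ l ∈ Finset.range k, harm (cstar n μ l - 1))
      + ∑ l ∈ Finset.range k, Impr n μ p l := by
    rw [Tail, ← Finset.range_eq_Ico, Finset.mul_sum, ← Finset.sum_add_distrib]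
    rfl
  rw [hTail]
  -- harmonic part
  have hhsum : ∑ l ∈ Finset.range k, harm (cstar n μ l - 1)
      ≤ 2*(k:ℝ) - 1 - ((n:ℝ) - k)*Real.log ((n:ℝ)/((n:ℝ) - k + 1)) := by
    obtain ⟨m, rfl⟩ : ∃ m, k = m + 1 := ⟨k - 1, by omega⟩
    rw [Finset.sum_range_succ']
    have h0 : harm (cstar n μ 0 - 1) = 0 := by rw [cstar_zero hn hμ]; simp [harm]
    rw [h0, add_zero]
    have hterm : ∀ t ∈ Finset.range m,
        harm (cstar n μ (t+1) - 1) ≤ 1 + Real.log ((n:ℝ)/((n - (t+1):ℕ):ℝ)) :=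
      fun t ht => harm_cstar_le hn (by rw [Finset.mem_range] at ht; omega)
    have hls := logsum hn m (by omega)
    calc ∑ t ∈ Finset.range m, harm (cstar n μ (t+1) - 1)
        ≤ ∑ t ∈ Finset.range m, (1 + Real.log ((n:ℝ)/((n - (t+1):ℕ):ℝ))) :=
          Finset.sum_le_sum hterm
      _ = (m:ℝ) + ∑ t ∈ Finset.range m, Real.log ((n:ℝ)/((n - (t+1):ℕ):ℝ)) := by
          rw [Finset.sum_add_distrib, Finset.sum_const, Finset.card_range]
          simp
      _ ≤ (m:ℝ) + (((m:ℝ)+1) - ((n:ℝ) - ((m:ℝ)+1)) * Real.log ((n:ℝ)/((n:ℝ) - ((m:ℝ)+1) + 1))) := by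
          linarith
      _ = 2*((m+1:ℕ):ℝ) - 1 - ((n:ℝ) - ((m+1:ℕ):ℝ))*Real.log ((n:ℝ)/((n:ℝ) - ((m+1:ℕ):ℝ) + 1)) := by
          push_cast
          ring
  -- improvement part
  have himpr_le : ∀ l, l < k → l ≤ b → Impr n μ p l ≤ (μ:ℝ)/(p*(1-p)^(n-1)) * (1/(n:ℝ)) := by
    intro l hlk hlb
    have hln : l < n := by omega
    have hd0 : (0:ℝ) < ((n-l:ℕ):ℝ) := by
      have : 0 < n - l := by omega
      exact_mod_cast this
    have hcs0 : (0:ℝ) < (cstar n μ l : ℝ) := by exact_mod_cast cstar_pos hμ hln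
    have hcs := cstar_mul (μ := μ) hln (floor_le_mul hμ hb hlb)
    have hcast : (n:ℝ) ≤ (cstar n μ l : ℝ) * ((n-l:ℕ):ℝ) := by exact_mod_cast hcs
    have e : (μ:ℝ)/(p*(1-p)^(n-1)) * (1/(n:ℝ)) = (μ:ℝ)/(p*(1-p)^(n-1)*(n:ℝ)) := by
      rw [div_mul_div_comm, mul_one]
    rw [e]
    unfold Impr
    apply div_le_div_of_nonneg_left (Nat.cast_nonneg μ) (by positivity)
    nlinarith
  by_cases hcase : k ≤ b + 1
  · rw [if_pos hcase]
    have hsum2 : ∑ l ∈ Finset.range k, Impr n μ p l ≤ (μ:ℝ)/(p*(1-p)^(n-1)) * ((k:ℝ)/(n:ℝ)) := by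
      calc ∑ l ∈ Finset.range k, Impr n μ p l
          ≤ ∑ l ∈ Finset.range k, (μ:ℝ)/(p*(1-p)^(n-1)) * (1/(n:ℝ)) :=
            Finset.sum_le_sum fun l hl => himpr_le l (Finset.mem_range.mp hl)
              (by have := Finset.mem_range.mp hl; omega)
        _ = (k:ℝ) * ((μ:ℝ)/(p*(1-p)^(n-1)) * (1/(n:ℝ))) := by
            rw [Finset.sum_const, Finset.card_range, nsmul_eq_mul]
        _ = (μ:ℝ)/(p*(1-p)^(n-1)) * ((k:ℝ)/(n:ℝ)) := by ring
    have h1 := mul_le_mul_of_nonneg_left hhsum hA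
    linarith
  · rw [if_neg hcase]
    push_neg at hcase
    have hsplit : ∑ l ∈ Finset.range k, Impr n μ p l
        = ∑ l ∈ Finset.Ico 0 (b+1), Impr n μ p l + ∑ l ∈ Finset.Ico (b+1) k, Impr n μ p l := by
      rw [Finset.range_eq_Ico, Finset.sum_Ico_consecutive _ (Nat.zero_le _) (by omega)]
    have hbound1 : ∑ l ∈ Finset.Ico 0 (b+1), Impr n μ p l
        ≤ (μ:ℝ)/(p*(1-p)^(n-1)) * (((b:ℝ)+1)/(n:ℝ)) := by
      calc ∑ l ∈ Finset.Ico 0 (b+1), Impr n μ p l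
          ≤ ∑ l ∈ Finset.Ico 0 (b+1), (μ:ℝ)/(p*(1-p)^(n-1)) * (1/(n:ℝ)) := by
            refine Finset.sum_le_sum fun l hl => ?_
            rw [Finset.mem_Ico] at hl
            exact himpr_le l (by omega) (by omega)
        _ = ((b:ℝ)+1) * ((μ:ℝ)/(p*(1-p)^(n-1)) * (1/(n:ℝ))) := by
            rw [Finset.sum_const, Nat.card_Ico, nsmul_eq_mul]
            push_cast
            ring
        _ = (μ:ℝ)/(p*(1-p)^(n-1)) * (((b:ℝ)+1)/(n:ℝ)) := by ring
    have hbound2 : ∑ l ∈ Finset.Ico (b+1) k, Impr n μ p l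
        = (μ:ℝ)/(p*(1-p)^(n-1)) * ((1/(μ:ℝ)) * (harm (n - b - 1) - harm (n - k))) := by
      have hterm : ∀ l ∈ Finset.Ico (b+1) k, Impr n μ p l
          = (μ:ℝ)/(p*(1-p)^(n-1)) * ((1/(μ:ℝ)) * (1/((n-l:ℕ):ℝ))) := by
        intro l hl
        rw [Finset.mem_Ico] at hl
        have hln : l < n := by omega
        have hcseq : cstar n μ l = μ :=
          cstar_eq_mu hln (mul_lt_of_gt_b hμ hb hl.1 (by omega))
        have hd0 : (0:ℝ) < ((n-l:ℕ):ℝ) := by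
          have : 0 < n - l := by omega
          exact_mod_cast this
        unfold Impr
        rw [hcseq]
        field_simp
      rw [Finset.sum_congr rfl hterm, ← Finset.mul_sum, ← Finset.mul_sum,
        harm_sum_Ico k (b+1) (by omega) hkn]
      have : n - (b+1) = n - b - 1 := by omega
      rw [this]
    have h1 := mul_le_mul_of_nonneg_left hhsum hA
    rw [hsplit, hbound2]
    rw [mul_add ((μ:ℝ)/(p*(1-p)^(n-1)))]
    linarith


/-! ### state space -/

section Kernel

variable {n μ k : ℕ} {p : ℝ}

/-- best fitness in the population -/
def bestF (n μ : ℕ) (X : Fin μ → Fin n → Bool) : ℕ :=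
  Finset.univ.sup fun j => oneMax n (X j)

/-- number of individuals of best fitness -/
def cnt (n μ : ℕ) (X : Fin μ → Fin n → Bool) : ℕ :=
  (Finset.univ.filter fun j => oneMax n (X j) = bestF n μ X).card

/-- minimum fitness in the population -/
def mfit (n μ : ℕ) (hμ : 1 ≤ μ) (X : Fin μ → Fin n → Bool) : ℕ :=
  (Finset.univ.image fun i => oneMax n (X i)).min'
    ((Finset.univ_nonempty_iff.mpr ⟨⟨0, hμ⟩⟩).image _)

/-- the potential of a population -/
noncomputable def gS (n μ k : ℕ) (p : ℝ) (X : Fin μ → Fin n → Bool) : ℝ :=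
  Gpot n μ k p (bestF n μ X) (cnt n μ X)

lemma oneMax_le_n (x : Fin n → Bool) : oneMax n x ≤ n := by
  unfold oneMax
  calc (Finset.univ.filter fun i : Fin n => x i = true).card
      ≤ (Finset.univ : Finset (Fin n)).card := Finset.card_filter_le _ _
    _ = n := by simp

lemma le_bestF (X : Fin μ → Fin n → Bool) (j : Fin μ) : oneMax n (X j) ≤ bestF n μ X := by
  unfold bestF
  exact Finset.le_sup (f := fun j => oneMax n (X j)) (Finset.mem_univ j)

lemma exists_bestF (hμ : 1 ≤ μ) (X : Fin μ → Fin n → Bool) :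
    ∃ j, oneMax n (X j) = bestF n μ X := by
  obtain ⟨j, -, hj⟩ := Finset.exists_mem_eq_sup Finset.univ
    (Finset.univ_nonempty_iff.mpr ⟨⟨0, hμ⟩⟩) (fun j : Fin μ => oneMax n (X j))
  exact ⟨j, hj.symm⟩

lemma cnt_pos (hμ : 1 ≤ μ) (X : Fin μ → Fin n → Bool) : 0 < cnt n μ X := by
  obtain ⟨j, hj⟩ := exists_bestF hμ X
  exact Finset.card_pos.mpr ⟨j, Finset.mem_filter.mpr ⟨Finset.mem_univ j, hj⟩⟩

lemma cnt_le_mu (X : Fin μ → Fin n → Bool) : cnt n μ X ≤ μ := by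
  calc cnt n μ X ≤ (Finset.univ : Finset (Fin μ)).card := Finset.card_filter_le _ _
    _ = μ := by simp

lemma good_iff (hμ : 1 ≤ μ) (X : Fin μ → Fin n → Bool) :
    (∃ i, k ≤ oneMax n (X i)) ↔ k ≤ bestF n μ X := by
  constructor
  · rintro ⟨i, hi⟩; exact le_trans hi (le_bestF X i)
  · intro h
    obtain ⟨j, hj⟩ := exists_bestF hμ X
    exact ⟨j, hj ▸ h⟩

lemma mfit_le (hμ : 1 ≤ μ) (X : Fin μ → Fin n → Bool) (j : Fin μ) :
    mfit n μ hμ X ≤ oneMax n (X j) :=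
  Finset.min'_le _ _ (Finset.mem_image_of_mem _ (Finset.mem_univ j))

lemma exists_mfit (hμ : 1 ≤ μ) (X : Fin μ → Fin n → Bool) :
    ∃ j, oneMax n (X j) = mfit n μ hμ X := by
  have := Finset.min'_mem (Finset.univ.image fun i => oneMax n (X i))
    ((Finset.univ_nonempty_iff.mpr ⟨⟨0, hμ⟩⟩).image _)
  rw [Finset.mem_image] at this
  obtain ⟨j, -, hj⟩ := this
  exact ⟨j, hj⟩

lemma mfit_le_bestF (hμ : 1 ≤ μ) (X : Fin μ → Fin n → Bool) :
    mfit n μ hμ X ≤ bestF n μ X := by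
  obtain ⟨j, hj⟩ := exists_bestF hμ X
  exact hj ▸ mfit_le hμ X j

/-! ### standard bit mutation -/

lemma sbm_eq_prod (x y : Fin n → Bool) :
    sbmProb n p x y = ∏ i, (if x i = y i then (1-p) else p) := by
  classical
  have hsum := Finset.card_filter_add_card_filter_not
    (s := (Finset.univ : Finset (Fin n))) (fun i => x i = y i)
  have hcard : (Finset.univ : Finset (Fin n)).card = n := by simp
  have hd : hammingDist x y = (Finset.univ.filter fun i => ¬ x i = y i).card := by
    rfl
  rw [← Finset.prod_filter_mul_prod_filter_not Finset.univ (fun i => x i = y i)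
    (fun i => if x i = y i then (1-p) else p)]
  have h1 : ∏ i ∈ Finset.univ.filter (fun i => x i = y i), (if x i = y i then (1-p) else p)
      = (1-p) ^ (Finset.univ.filter fun i => x i = y i).card := by
    rw [Finset.prod_congr rfl (fun i hi => if_pos (Finset.mem_filter.mp hi).2)]
    exact Finset.prod_const _
  have h2 : ∏ i ∈ Finset.univ.filter (fun i => ¬ x i = y i), (if x i = y i then (1-p) else p)
      = p ^ (Finset.univ.filter fun i => ¬ x i = y i).card := by
    rw [Finset.prod_congr rfl (fun i hi => if_neg (Finset.mem_filter.mp hi).2)]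
    exact Finset.prod_const _
  rw [h1, h2]
  unfold sbmProb
  rw [hd]
  have h3 : (Finset.univ.filter fun i => x i = y i).card
      = n - (Finset.univ.filter fun i => ¬ x i = y i).card := by omega
  rw [h3, mul_comm]

lemma sbm_nonneg (hp0 : 0 < p) (hp1 : p < 1) (x y : Fin n → Bool) :
    0 ≤ sbmProb n p x y := by
  unfold sbmProb
  have hq : (0:ℝ) ≤ 1 - p := by linarith
  exact mul_nonneg (pow_nonneg hp0.le _) (pow_nonneg hq _)

lemma sbm_sum (x : Fin n → Bool) : ∑ y, sbmProb n p x y = 1 := by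
  classical
  have h1 : ∀ y, sbmProb n p x y = ∏ i, (fun i (b : Bool) => if x i = b then (1-p) else p) i (y i) :=
    fun y => sbm_eq_prod x y
  rw [Finset.sum_congr rfl fun y _ => h1 y]
  have h2 := Finset.prod_univ_sum (fun _ : Fin n => (Finset.univ : Finset Bool))
    (fun i (b : Bool) => if x i = b then (1-p) else p)
  rw [Fintype.piFinset_univ] at h2
  rw [← h2]
  have h3 : ∀ i : Fin n, ∑ b : Bool, (if x i = b then (1-p) else p) = 1 := by
    intro i
    cases hxi : x i <;> simp [hxi] <;> ring
  rw [Finset.prod_congr rfl fun i _ => h3 i, Finset.prod_const_one]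

lemma sbm_self (x : Fin n → Bool) : sbmProb n p x x = (1-p)^n := by
  unfold sbmProb
  rw [hammingDist_self]
  simp

lemma oneMax_update {x : Fin n → Bool} {β : Fin n} (hβ : x β = false) :
    oneMax n (Function.update x β true) = oneMax n x + 1 := by
  classical
  unfold oneMax
  have h1 : (Finset.univ.filter fun i => Function.update x β true i = true)
      = insert β (Finset.univ.filter fun i => x i = true) := by
    ext i
    by_cases h : i = β
    · subst h
      simp [Function.update_self]
    · simp [Function.update_of_ne h, h]
  rw [h1, Finset.card_insert_of_notMem (by simp [hβ])]

lemma sbm_flip {x : Fin n → Bool} {β : Fin n} (hβ : x β = false) :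
    sbmProb n p x (Function.update x β true) = p * (1-p)^(n-1) := by
  classical
  unfold sbmProb
  have h1 : hammingDist x (Function.update x β true) = 1 := by
    have h2 : (Finset.univ.filter fun i => ¬ x i = Function.update x β true i) = {β} := by
      ext i
      by_cases h : i = β
      · subst h
        simp [Function.update_self, hβ]
      · simp [Function.update_of_ne h, h]
    show (Finset.univ.filter fun i => ¬ x i = Function.update x β true i).card = 1
    rw [h2, Finset.card_singleton]
  rw [h1, pow_one]

/-! ### selection -/

noncomputable def wsel (n μ : ℕ) (X : Fin μ → Fin n → Bool) (y : Fin n → Bool) : ℕ :=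
  (insert (oneMax n y) (Finset.univ.image fun i => oneMax n (X i))).min'
    (Finset.insert_nonempty _ _)

noncomputable def Wsel (n μ : ℕ) (X : Fin μ → Fin n → Bool) (y : Fin n → Bool) :
    Finset (Fin μ) :=
  Finset.univ.filter fun i => oneMax n (X i) = wsel n μ X y

lemma selProb_eq (X : Fin μ → Fin n → Bool) (y : Fin n → Bool) (X' : Fin μ → Fin n → Bool) :
    selProb n μ X y X' =
      if Wsel n μ X y = ∅ then (if X' = X then 1 else 0)
      else (∑ i ∈ Wsel n μ X y, if X' = Function.update X i y then (1 : ℝ) else 0)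
        / ((Wsel n μ X y).card : ℝ) := rfl

lemma selSum (X : Fin μ → Fin n → Bool) (y : Fin n → Bool)
    (h : (Fin μ → Fin n → Bool) → ℝ) :
    ∑ X', selProb n μ X y X' * h X'
      = if Wsel n μ X y = ∅ then h X
        else (∑ i ∈ Wsel n μ X y, h (Function.update X i y)) / ((Wsel n μ X y).card : ℝ) := by
  classical
  by_cases hW : Wsel n μ X y = ∅
  · rw [if_pos hW]
    have e : ∀ X', selProb n μ X y X' * h X' = if X' = X then h X' else 0 := by
      intro X'
      rw [selProb_eq, if_pos hW, ite_mul, one_mul, zero_mul]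
    rw [Finset.sum_congr rfl fun X' _ => e X', Finset.sum_ite_eq' Finset.univ X h,
      if_pos (Finset.mem_univ X)]
  · rw [if_neg hW]
    have e : ∀ X', selProb n μ X y X' * h X'
        = ∑ i ∈ Wsel n μ X y,
            (if X' = Function.update X i y then h X' else 0) / ((Wsel n μ X y).card : ℝ) := by
      intro X'
      rw [selProb_eq, if_neg hW, div_mul_eq_mul_div, Finset.sum_mul, Finset.sum_div]
      refine Finset.sum_congr rfl fun i _ => ?_
      rw [ite_mul, one_mul, zero_mul]
    rw [Finset.sum_congr rfl fun X' _ => e X', Finset.sum_comm, Finset.sum_div]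
    refine Finset.sum_congr rfl fun i _ => ?_
    rw [← Finset.sum_div]
    congr 1
    rw [Finset.sum_ite_eq' Finset.univ (Function.update X i y) h,
      if_pos (Finset.mem_univ _)]

lemma wsel_eq (hμ : 1 ≤ μ) (X : Fin μ → Fin n → Bool) (y : Fin n → Bool)
    (hy : mfit n μ hμ X ≤ oneMax n y) : wsel n μ X y = mfit n μ hμ X := by
  unfold wsel
  rw [Finset.min'_insert, min_comm]
  exact inf_eq_left.mpr hy

lemma Wsel_empty_of (hμ : 1 ≤ μ) {X : Fin μ → Fin n → Bool} {y : Fin n → Bool}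
    (hy : oneMax n y < mfit n μ hμ X) : Wsel n μ X y = ∅ := by
  unfold Wsel
  rw [Finset.filter_eq_empty_iff]
  intro i _
  have h1 : wsel n μ X y = oneMax n y := by
    unfold wsel
    rw [Finset.min'_insert, min_comm]
    exact inf_eq_right.mpr hy.le
    exact (Finset.univ_nonempty_iff.mpr ⟨⟨0, hμ⟩⟩).image _
  have h2 := mfit_le hμ X i
  omega

lemma Wsel_nonempty_le (hμ : 1 ≤ μ) {X : Fin μ → Fin n → Bool} {y : Fin n → Bool}
    (hW : Wsel n μ X y ≠ ∅) : mfit n μ hμ X ≤ oneMax n y := by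
  by_contra h
  push_neg at h
  exact hW (Wsel_empty_of hμ h)

lemma Wsel_mem (hμ : 1 ≤ μ) {X : Fin μ → Fin n → Bool} {y : Fin n → Bool}
    (hW : Wsel n μ X y ≠ ∅) {i : Fin μ} (hi : i ∈ Wsel n μ X y) :
    oneMax n (X i) = mfit n μ hμ X := by
  rw [Wsel, Finset.mem_filter] at hi
  rw [hi.2, wsel_eq hμ X y (Wsel_nonempty_le hμ hW)]

lemma Wsel_nonempty (hμ : 1 ≤ μ) {X : Fin μ → Fin n → Bool} {y : Fin n → Bool}
    (hy : mfit n μ hμ X ≤ oneMax n y) : Wsel n μ X y ≠ ∅ := by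
  obtain ⟨j, hj⟩ := exists_mfit hμ X
  have : j ∈ Wsel n μ X y := by
    rw [Wsel, Finset.mem_filter]
    exact ⟨Finset.mem_univ j, by rw [hj, wsel_eq hμ X y hy]⟩
  exact Finset.ne_empty_of_mem this

lemma selSum_le (X : Fin μ → Fin n → Bool) (y : Fin n → Bool)
    (h : (Fin μ → Fin n → Bool) → ℝ) (D : ℝ)
    (hemp : h X ≤ D)
    (hupd : ∀ i ∈ Wsel n μ X y, h (Function.update X i y) ≤ D) :
    ∑ X', selProb n μ X y X' * h X' ≤ D := by
  rw [selSum]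
  split
  · exact hemp
  · rename_i hW
    have hc : 0 < ((Wsel n μ X y).card : ℝ) := by
      have := Finset.card_pos.mpr (Finset.nonempty_iff_ne_empty.mpr hW)
      exact_mod_cast this
    rw [div_le_iff₀ hc]
    calc ∑ i ∈ Wsel n μ X y, h (Function.update X i y)
        ≤ (Wsel n μ X y).card • D := Finset.sum_le_card_nsmul _ _ _ hupd
      _ = D * ((Wsel n μ X y).card : ℝ) := by rw [nsmul_eq_mul, mul_comm]

lemma selSum_le' (X : Fin μ → Fin n → Bool) (y : Fin n → Bool)
    (h : (Fin μ → Fin n → Bool) → ℝ) (D : ℝ) (hW : Wsel n μ X y ≠ ∅)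
    (hupd : ∀ i ∈ Wsel n μ X y, h (Function.update X i y) ≤ D) :
    ∑ X', selProb n μ X y X' * h X' ≤ D := by
  rw [selSum, if_neg hW]
  have hc : 0 < ((Wsel n μ X y).card : ℝ) := by
    have := Finset.card_pos.mpr (Finset.nonempty_iff_ne_empty.mpr hW)
    exact_mod_cast this
  rw [div_le_iff₀ hc]
  calc ∑ i ∈ Wsel n μ X y, h (Function.update X i y)
      ≤ (Wsel n μ X y).card • D := Finset.sum_le_card_nsmul _ _ _ hupd
    _ = D * ((Wsel n μ X y).card : ℝ) := by rw [nsmul_eq_mul, mul_comm]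

/-! ### effect of updates on the potential -/

lemma fit_update (X : Fin μ → Fin n → Bool) (i : Fin μ) (y : Fin n → Bool) (j : Fin μ) :
    oneMax n (Function.update X i y j) = if j = i then oneMax n y else oneMax n (X j) := by
  by_cases h : j = i
  · rw [h, Function.update_self, if_pos rfl]
  · rw [Function.update_of_ne h, if_neg h]

lemma bestF_update_le (X : Fin μ → Fin n → Bool) (i : Fin μ) (y : Fin n → Bool)
    (hy : oneMax n y ≤ bestF n μ X) :
    bestF n μ (Function.update X i y) ≤ bestF n μ X := by
  apply Finset.sup_le
  intro j _
  rw [fit_update]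
  split
  · exact hy
  · exact le_bestF X j

lemma bestF_le_update (X : Fin μ → Fin n → Bool) (i : Fin μ) (y : Fin n → Bool) :
    oneMax n y ≤ bestF n μ (Function.update X i y) := by
  have h := le_bestF (Function.update X i y) i
  rwa [fit_update, if_pos rfl] at h

lemma bestF_update_eq (hμ : 1 ≤ μ) (X : Fin μ → Fin n → Bool) (i : Fin μ) (y : Fin n → Bool)
    (hy : oneMax n y ≤ bestF n μ X)
    (hatt : oneMax n y = bestF n μ X ∨ oneMax n (X i) < bestF n μ X) :
    bestF n μ (Function.update X i y) = bestF n μ X := by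
  refine le_antisymm (bestF_update_le X i y hy) ?_
  rcases hatt with h | h
  · have := bestF_le_update X i y
    omega
  · obtain ⟨j0, hj0⟩ := exists_bestF hμ X
    have hne : j0 ≠ i := fun he => by rw [he] at hj0; omega
    have h2 := le_bestF (Function.update X i y) j0
    rwa [fit_update, if_neg hne, hj0] at h2

lemma cnt_update_le (hμ : 1 ≤ μ) (X : Fin μ → Fin n → Bool) (i : Fin μ) (y : Fin n → Bool)
    (hy : oneMax n y ≤ bestF n μ X) (hi : oneMax n (X i) < bestF n μ X) :
    cnt n μ X ≤ cnt n μ (Function.update X i y) := by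
  have hbb := bestF_update_eq hμ X i y hy (Or.inr hi)
  apply Finset.card_le_card
  intro j hj
  rw [Finset.mem_filter] at hj ⊢
  refine ⟨Finset.mem_univ _, ?_⟩
  have hne : j ≠ i := fun he => by rw [he] at hj; omega
  rw [fit_update, if_neg hne, hbb]
  exact hj.2

lemma g_update_le (hμ : 1 ≤ μ) (hp0 : 0 < p) (hp1 : p < 1) (X : Fin μ → Fin n → Bool)
    (hbad : bestF n μ X < k) (i : Fin μ) (y : Fin n → Bool)
    (hmy : mfit n μ hμ X ≤ oneMax n y) (hfi : oneMax n (X i) = mfit n μ hμ X) :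
    gS n μ k p (Function.update X i y) ≤ gS n μ k p X := by
  by_cases hlt : bestF n μ X < oneMax n y
  · -- strict improvement
    have h1 : bestF n μ X + 1 ≤ bestF n μ (Function.update X i y) :=
      le_trans hlt (bestF_le_update X i y)
    have h2 := Gpot_improve (n := n) (μ := μ) (k := k) hp0 hp1 (cnt n μ X) hbad
    have h3 := Impr_nonneg (n := n) (μ := μ) hp0 hp1 (bestF n μ X)
    calc gS n μ k p (Function.update X i y)
        ≤ Tail n μ k p (bestF n μ (Function.update X i y)) := Gpot_le_Tail hp0 hp1 _ _
      _ ≤ Tail n μ k p (bestF n μ X + 1) := Tail_anti hp0 hp1 h1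
      _ ≤ gS n μ k p X := by unfold gS; linarith
  · push_neg at hlt
    by_cases hall : oneMax n (X i) = bestF n μ X
    · -- everybody has the best fitness
      have hmb : mfit n μ hμ X = bestF n μ X := by omega
      have hfy : oneMax n y = bestF n μ X := by omega
      have hbb := bestF_update_eq hμ X i y hlt (Or.inl hfy)
      have hcnt : cnt n μ X ≤ cnt n μ (Function.update X i y) := by
        have hcc : cnt n μ (Function.update X i y) = μ := by
          unfold cnt
          have hfil : (Finset.univ.filter fun j =>
              oneMax n (Function.update X i y j) = bestF n μ (Function.update X i y))
              = Finset.univ := by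
            refine Finset.filter_true_of_mem fun j _ => ?_
            rw [hbb, fit_update]
            split
            · exact hfy
            · have h2 := mfit_le hμ X j
              have h3 := le_bestF X j
              omega
          rw [hfil]
          simp
        rw [hcc]
        exact cnt_le_mu X
      unfold gS
      rw [hbb]
      exact Gpot_anti hp0 hp1 _ hcnt
    · have hi : oneMax n (X i) < bestF n μ X := lt_of_le_of_ne (le_bestF X i) hall
      have hbb := bestF_update_eq hμ X i y hlt (Or.inr hi)
      have hcnt := cnt_update_le hμ X i y hlt hi
      unfold gS
      rw [hbb]
      exact Gpot_anti hp0 hp1 _ hcnt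

lemma g_update_clone (hμ : 1 ≤ μ) (hp0 : 0 < p) (hp1 : p < 1)
    (X : Fin μ → Fin n → Bool) (hbad : bestF n μ X < k)
    (hc : cnt n μ X < cstar n μ (bestF n μ X)) (j i : Fin μ)
    (hj : oneMax n (X j) = bestF n μ X) (hi : oneMax n (X i) < bestF n μ X) :
    gS n μ k p (Function.update X i (X j)) + (μ:ℝ)/((1-p)^n * (cnt n μ X : ℝ))
      ≤ gS n μ k p X := by
  have hbb := bestF_update_eq hμ X i (X j) (hj ▸ le_rfl) (Or.inr hi)
  have hine : i ≠ j := fun he => by rw [he] at hi; omega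
  have hcnt : cnt n μ (Function.update X i (X j)) = cnt n μ X + 1 := by
    unfold cnt
    have hfil : (Finset.univ.filter fun j' =>
        oneMax n (Function.update X i (X j) j') = bestF n μ (Function.update X i (X j)))
        = insert i (Finset.univ.filter fun j' => oneMax n (X j') = bestF n μ X) := by
      ext j'
      rw [Finset.mem_insert, Finset.mem_filter, Finset.mem_filter, hbb, fit_update]
      by_cases h : j' = i
      · simp [h, hj]
      · simp [h]
    rw [hfil, Finset.card_insert_of_notMem]
    rw [Finset.mem_filter]
    push_neg
    intro _
    omega
  unfold gS
  rw [hbb, hcnt]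
  exact Gpot_clone hp0 hp1 hbad (cnt_pos hμ X) hc

lemma g_update_improve2 (hp0 : 0 < p) (hp1 : p < 1)
    (X : Fin μ → Fin n → Bool) (hbad : bestF n μ X < k) (i : Fin μ) (y : Fin n → Bool)
    (hy : bestF n μ X < oneMax n y) :
    gS n μ k p (Function.update X i y) + Impr n μ p (bestF n μ X) ≤ gS n μ k p X := by
  have h1 : bestF n μ X + 1 ≤ bestF n μ (Function.update X i y) :=
    le_trans hy (bestF_le_update X i y)
  have h2 := Gpot_improve (n := n) (μ := μ) (k := k) hp0 hp1 (cnt n μ X) hbad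
  have h3 : gS n μ k p (Function.update X i y) ≤ Tail n μ k p (bestF n μ X + 1) :=
    le_trans (Gpot_le_Tail hp0 hp1 _ _) (Tail_anti hp0 hp1 h1)
  unfold gS at h3 ⊢
  linarith

lemma selProb_nonneg (X : Fin μ → Fin n → Bool) (y : Fin n → Bool)
    (X' : Fin μ → Fin n → Bool) : 0 ≤ selProb n μ X y X' := by
  rw [selProb_eq]
  split
  · split <;> norm_num
  · apply div_nonneg _ (Nat.cast_nonneg _)
    exact Finset.sum_nonneg fun i _ => by split <;> norm_num

lemma kernel_nonneg (hp0 : 0 < p) (hp1 : p < 1) (X X' : Fin μ → Fin n → Bool) :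
    0 ≤ muPlusOneKernel n μ p X X' := by
  unfold muPlusOneKernel
  apply mul_nonneg (by positivity)
  exact Finset.sum_nonneg fun j _ => Finset.sum_nonneg fun y _ =>
    mul_nonneg (sbm_nonneg hp0 hp1 _ _) (selProb_nonneg _ _ _)

/-! ### the drift inequality for the (μ+1) EA kernel -/

theorem kernel_drift (hn : 1 ≤ n) (hμ : 1 ≤ μ) (hp0 : 0 < p) (hp1 : p < 1)
    (hkn : k ≤ n) (X : Fin μ → Fin n → Bool) (hbad : bestF n μ X < k) :
    1 + ∑ X', muPlusOneKernel n μ p X X' * gS n μ k p X' ≤ gS n μ k p X := by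
  classical
  have hq : (0:ℝ) < 1 - p := by linarith
  have hμ0 : (0:ℝ) < (μ:ℝ) := by exact_mod_cast hμ
  have hc1 : 1 ≤ cnt n μ X := cnt_pos hμ X
  have hc0 : (0:ℝ) < (cnt n μ X : ℝ) := by exact_mod_cast hc1
  have hi0n : bestF n μ X < n := by omega
  set Ss : (Fin n → Bool) → ℝ := fun y => ∑ X', selProb n μ X y X' * gS n μ k p X' with hSs
  have hexpand : ∑ X', muPlusOneKernel n μ p X X' * gS n μ k p X'
      = (1/(μ:ℝ)) * ∑ j, ∑ y, sbmProb n p (X j) y * Ss y := by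
    have e1 : ∀ X', muPlusOneKernel n μ p X X' * gS n μ k p X'
        = (1/(μ:ℝ)) * ∑ j, ∑ y, sbmProb n p (X j) y * (selProb n μ X y X' * gS n μ k p X') := by
      intro X'
      rw [muPlusOneKernel, mul_assoc]
      congr 1
      rw [Finset.sum_mul]
      refine Finset.sum_congr rfl fun j _ => ?_
      rw [Finset.sum_mul]
      exact Finset.sum_congr rfl fun y _ => mul_assoc _ _ _
    rw [Finset.sum_congr rfl fun X' _ => e1 X', ← Finset.mul_sum]
    congr 1
    rw [Finset.sum_comm]
    refine Finset.sum_congr rfl fun j _ => ?_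
    rw [Finset.sum_comm]
    exact Finset.sum_congr rfl fun y _ => (Finset.mul_sum _ _ _).symm
  have hSle : ∀ y, Ss y ≤ gS n μ k p X := by
    intro y
    refine selSum_le X y _ _ le_rfl fun i hi => ?_
    by_cases hW : Wsel n μ X y = ∅
    · rw [hW] at hi; exact absurd hi (Finset.notMem_empty i)
    · exact g_update_le hμ hp0 hp1 X hbad i y (Wsel_nonempty_le hμ hW) (Wsel_mem hμ hW hi)
  have hjany : ∀ j : Fin μ, ∑ y, sbmProb n p (X j) y * Ss y ≤ gS n μ k p X := by
    intro j
    calc ∑ y, sbmProb n p (X j) y * Ss y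
        ≤ ∑ y, sbmProb n p (X j) y * gS n μ k p X :=
          Finset.sum_le_sum fun y _ => mul_le_mul_of_nonneg_left (hSle y) (sbm_nonneg hp0 hp1 _ _)
      _ = gS n μ k p X := by rw [← Finset.sum_mul, sbm_sum, one_mul]
  rw [hexpand]
  by_cases hcase : cnt n μ X < cstar n μ (bestF n μ X)
  · -- === clone phase ===
    set δ : ℝ := (μ:ℝ)/((1-p)^n * (cnt n μ X : ℝ)) with hδ
    have hex : ∃ j', oneMax n (X j') < bestF n μ X := by
      have hcmu : cnt n μ X < μ := lt_of_lt_of_le hcase (cstar_le_mu n μ _)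
      obtain ⟨j', hj'⟩ : ∃ j',
          j' ∉ (Finset.univ.filter fun j => oneMax n (X j) = bestF n μ X) := by
        by_contra hno
        push_neg at hno
        have : (Finset.univ.filter fun j => oneMax n (X j) = bestF n μ X) = Finset.univ :=
          Finset.eq_univ_iff_forall.mpr hno
        have h8 : cnt n μ X = μ := by unfold cnt; rw [this]; simp
        omega
      rw [Finset.mem_filter] at hj'
      push_neg at hj'
      have h9 : oneMax n (X j') ≠ bestF n μ X := by simpa using hj' (Finset.mem_univ j')
      have h10 := le_bestF X j'
      exact ⟨j', by omega⟩
    have hclone : ∀ j, oneMax n (X j) = bestF n μ X → Ss (X j) ≤ gS n μ k p X - δ := by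
      intro j hj
      obtain ⟨j', hj'⟩ := hex
      have hmlt : mfit n μ hμ X < bestF n μ X := lt_of_le_of_lt (mfit_le hμ X j') hj'
      have hWne : Wsel n μ X (X j) ≠ ∅ := Wsel_nonempty hμ (by omega)
      refine selSum_le' X (X j) _ _ hWne fun i hi => ?_
      have hfit_i : oneMax n (X i) = mfit n μ hμ X := Wsel_mem hμ hWne hi
      have hilt : oneMax n (X i) < bestF n μ X := by omega
      have h11 := g_update_clone hμ hp0 hp1 X hbad hcase j i hj hilt
      rw [hδ]
      linarith
    have hjbest : ∀ j, oneMax n (X j) = bestF n μ X →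
        ∑ y, sbmProb n p (X j) y * Ss y ≤ gS n μ k p X - (1-p)^n * δ := by
      intro j hj
      have hptw : ∀ y, sbmProb n p (X j) y * Ss y
          ≤ sbmProb n p (X j) y * gS n μ k p X - (if y = X j then (1-p)^n * δ else 0) := by
        intro y
        by_cases hy : y = X j
        · rw [if_pos hy, hy, sbm_self]
          have h5 := hclone j hj
          have h6 := mul_le_mul_of_nonneg_left h5 (le_of_lt (pow_pos hq n))
          rw [mul_sub] at h6
          linarith
        · rw [if_neg hy, sub_zero]
          exact mul_le_mul_of_nonneg_left (hSle y) (sbm_nonneg hp0 hp1 _ _)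
      calc ∑ y, sbmProb n p (X j) y * Ss y
          ≤ ∑ y, (sbmProb n p (X j) y * gS n μ k p X - (if y = X j then (1-p)^n * δ else 0)) :=
            Finset.sum_le_sum fun y _ => hptw y
        _ = gS n μ k p X - (1-p)^n * δ := by
            rw [Finset.sum_sub_distrib, ← Finset.sum_mul, sbm_sum, one_mul,
              Finset.sum_ite_eq' Finset.univ (X j) (fun _ => (1-p)^n * δ),
              if_pos (Finset.mem_univ _)]
    have htot : ∑ j, ∑ y, sbmProb n p (X j) y * Ss y
        ≤ (μ:ℝ) * gS n μ k p X - (cnt n μ X : ℝ) * ((1-p)^n * δ) := by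
      calc ∑ j, ∑ y, sbmProb n p (X j) y * Ss y
          ≤ ∑ j, (gS n μ k p X
              - (if oneMax n (X j) = bestF n μ X then (1-p)^n * δ else 0)) := by
            refine Finset.sum_le_sum fun j _ => ?_
            by_cases hj : oneMax n (X j) = bestF n μ X
            · rw [if_pos hj]; exact hjbest j hj
            · rw [if_neg hj, sub_zero]; exact hjany j
        _ = (μ:ℝ) * gS n μ k p X - (cnt n μ X : ℝ) * ((1-p)^n * δ) := by
            rw [Finset.sum_sub_distrib, Finset.sum_const, Finset.card_univ, Fintype.card_fin,
              nsmul_eq_mul, ← Finset.sum_filter, Finset.sum_const, nsmul_eq_mul]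
            rfl
    have hce : (cnt n μ X : ℝ) * ((1-p)^n * δ) = (μ:ℝ) := by
      rw [hδ]
      field_simp
    rw [hce] at htot
    have h7 := mul_le_mul_of_nonneg_left htot (by positivity : (0:ℝ) ≤ 1/(μ:ℝ))
    have h8 : (1/(μ:ℝ)) * ((μ:ℝ) * gS n μ k p X - (μ:ℝ)) = gS n μ k p X - 1 := by
      field_simp
    linarith
  · -- === improvement phase ===
    push_neg at hcase
    have hcs1 : 1 ≤ cstar n μ (bestF n μ X) := cstar_pos hμ hi0n
    have hcs0 : (0:ℝ) < (cstar n μ (bestF n μ X) : ℝ) := by exact_mod_cast hcs1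
    have hd1 : 1 ≤ n - bestF n μ X := by omega
    have hd0 : (0:ℝ) < ((n - bestF n μ X : ℕ) : ℝ) := by exact_mod_cast hd1
    set I : ℝ := Impr n μ p (bestF n μ X) with hI
    have himp : ∀ y, bestF n μ X < oneMax n y → Ss y ≤ gS n μ k p X - I := by
      intro y hy
      have hWne : Wsel n μ X y ≠ ∅ :=
        Wsel_nonempty hμ (le_trans (mfit_le_bestF hμ X) hy.le)
      refine selSum_le' X y _ _ hWne fun i _ => ?_
      have h11 := g_update_improve2 hp0 hp1 X hbad i y hy
      rw [hI]
      linarith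
    have hjbest : ∀ j, oneMax n (X j) = bestF n μ X →
        ∑ y, sbmProb n p (X j) y * Ss y
          ≤ gS n μ k p X - ((n - bestF n μ X : ℕ) : ℝ) * (p * (1-p)^(n-1) * I) := by
      intro j hj
      set Fl : Finset (Fin n → Bool) :=
        (Finset.univ.filter fun β => X j β = false).image
          (fun β => Function.update (X j) β true) with hFl
      have hcard : Fl.card = n - bestF n μ X := by
        rw [hFl, Finset.card_image_of_injOn]
        · have h12 := Finset.card_filter_add_card_filter_not
            (s := (Finset.univ : Finset (Fin n))) (fun i => X j i = true)
          have h13 : (Finset.univ.filter fun i => ¬ X j i = true)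
              = (Finset.univ.filter fun i => X j i = false) := by
            refine Finset.filter_congr fun i _ => ?_
            simp
          have h14 : (Finset.univ.filter fun i => X j i = true).card = bestF n μ X := hj
          have h15 : (Finset.univ : Finset (Fin n)).card = n := by simp
          rw [h13] at h12
          omega
        · intro β hβ β' hβ' he
          by_contra hne
          have h16 : Function.update (X j) β true β = Function.update (X j) β' true β :=
            congrFun he β
          rw [Function.update_self, Function.update_of_ne hne] at h16
          rw [Finset.mem_coe, Finset.mem_filter] at hβ
          rw [hβ.2] at h16
          exact Bool.noConfusion h16
      have hmem : ∀ y ∈ Fl, sbmProb n p (X j) y = p * (1-p)^(n-1)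
          ∧ bestF n μ X < oneMax n y := by
        intro y hy
        rw [hFl, Finset.mem_image] at hy
        obtain ⟨β, hβ, rfl⟩ := hy
        rw [Finset.mem_filter] at hβ
        refine ⟨sbm_flip hβ.2, ?_⟩
        rw [oneMax_update hβ.2, hj]
        omega
      have hptw : ∀ y, sbmProb n p (X j) y * Ss y
          ≤ sbmProb n p (X j) y * gS n μ k p X - (if y ∈ Fl then p * (1-p)^(n-1) * I else 0) := by
        intro y
        by_cases hy : y ∈ Fl
        · rw [if_pos hy]
          obtain ⟨hsbm, hgt⟩ := hmem y hy
          have h5 := himp y hgt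
          have h6 := mul_le_mul_of_nonneg_left h5 (sbm_nonneg hp0 hp1 (X j) y)
          rw [mul_sub] at h6
          rw [hsbm] at h6 ⊢
          linarith
        · rw [if_neg hy, sub_zero]
          exact mul_le_mul_of_nonneg_left (hSle y) (sbm_nonneg hp0 hp1 _ _)
      calc ∑ y, sbmProb n p (X j) y * Ss y
          ≤ ∑ y, (sbmProb n p (X j) y * gS n μ k p X
              - (if y ∈ Fl then p * (1-p)^(n-1) * I else 0)) :=
            Finset.sum_le_sum fun y _ => hptw y
        _ = gS n μ k p X - ((n - bestF n μ X : ℕ) : ℝ) * (p * (1-p)^(n-1) * I) := by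
            rw [Finset.sum_sub_distrib, ← Finset.sum_mul, sbm_sum, one_mul,
              Finset.sum_ite_mem, Finset.univ_inter, Finset.sum_const, hcard, nsmul_eq_mul]
    have htot : ∑ j, ∑ y, sbmProb n p (X j) y * Ss y
        ≤ (μ:ℝ) * gS n μ k p X
          - (cnt n μ X : ℝ) * (((n - bestF n μ X : ℕ) : ℝ) * (p * (1-p)^(n-1) * I)) := by
      calc ∑ j, ∑ y, sbmProb n p (X j) y * Ss y
          ≤ ∑ j, (gS n μ k p X - (if oneMax n (X j) = bestF n μ X then
              ((n - bestF n μ X : ℕ) : ℝ) * (p * (1-p)^(n-1) * I) else 0)) := by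
            refine Finset.sum_le_sum fun j _ => ?_
            by_cases hj : oneMax n (X j) = bestF n μ X
            · rw [if_pos hj]; exact hjbest j hj
            · rw [if_neg hj, sub_zero]; exact hjany j
        _ = _ := by
            rw [Finset.sum_sub_distrib, Finset.sum_const, Finset.card_univ, Fintype.card_fin,
              nsmul_eq_mul, ← Finset.sum_filter, Finset.sum_const, nsmul_eq_mul]
            rfl
    have hge : (μ:ℝ) ≤ (cnt n μ X : ℝ)
        * (((n - bestF n μ X : ℕ) : ℝ) * (p * (1-p)^(n-1) * I)) := by
      have hIe : I = (μ:ℝ) / ((cstar n μ (bestF n μ X) : ℝ)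
          * ((n - bestF n μ X : ℕ) : ℝ) * p * (1-p)^(n-1)) := rfl
      have he2 : (cnt n μ X : ℝ) * (((n - bestF n μ X : ℕ) : ℝ) * (p * (1-p)^(n-1) * I))
          = (cnt n μ X : ℝ) * (μ:ℝ) / (cstar n μ (bestF n μ X) : ℝ) := by
        rw [hIe]
        field_simp
      rw [he2, le_div_iff₀ hcs0]
      have hcc : (cstar n μ (bestF n μ X) : ℝ) ≤ (cnt n μ X : ℝ) := by exact_mod_cast hcase
      nlinarith
    have h7 := mul_le_mul_of_nonneg_left htot (by positivity : (0:ℝ) ≤ 1/(μ:ℝ))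
    have h8 : (1/(μ:ℝ)) * ((μ:ℝ) * gS n μ k p X - (μ:ℝ)) = gS n μ k p X - 1 := by
      field_simp
    have h9 : (1/(μ:ℝ)) * ((μ:ℝ) * gS n μ k p X
          - (cnt n μ X : ℝ) * (((n - bestF n μ X : ℕ) : ℝ) * (p * (1-p)^(n-1) * I)))
        ≤ (1/(μ:ℝ)) * ((μ:ℝ) * gS n μ k p X - (μ:ℝ)) := by
      apply mul_le_mul_of_nonneg_left _ (by positivity : (0:ℝ) ≤ 1/(μ:ℝ))
      linarith
    linarith

end Kernel

end EA

/-- Fixed-target upper bound for the (μ+1) EA with population size `μ ≥ 1` and mutation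
probability `p ∈ (0,1)` on OneMax with uniformly random initialization: counting fitness
evaluations (`μ` for the initial population plus one per iteration), with
`b = ⌊n(1−1/μ)⌋`, for every target `1 ≤ k ≤ n`,
`E[T_k] ≤ μ + (μ/(1−p)^n)·(2k − 1 − (n−k)·ln(n/(n−k+1))) + (μ/(p(1−p)^{n−1}))·R`,
where `R = k/n` if `k ≤ b+1` and `R = (b+1)/n + (1/μ)·(H_{n−b−1} − H_{n−k})` otherwise. -/
theorem muPlusOneEA_oneMax_fixed_target_upper
    (n μ : ℕ) (hn : 1 ≤ n) (hμ : 1 ≤ μ)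
    (p : ℝ) (hp0 : 0 < p) (hp1 : p < 1)
    {Ω : Type*} [MeasurableSpace Ω] (P : Measure Ω) [IsProbabilityMeasure P]
    (x : ℕ → Ω → Fin μ → Fin n → Bool)
    (hchain : IsMarkovProcess P x (fun _ => 1 / 2 ^ (n * μ)) (muPlusOneKernel n μ p))
    (b : ℕ) (hb : b = ⌊(n : ℝ) * (1 - 1 / (μ : ℝ))⌋₊)
    (k : ℕ) (hk1 : 1 ≤ k) (hkn : k ≤ n) :
    ∫⁻ ω, ((μ : ENNReal) +
        hitTime x (fun X : Fin μ → Fin n → Bool => ∃ i, k ≤ oneMax n (X i)) ω) ∂P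
      ≤ ENNReal.ofReal ((μ : ℝ)
          + (μ : ℝ) / (1 - p) ^ n *
              (2 * (k : ℝ) - 1 - ((n : ℝ) - k) * Real.log ((n : ℝ) / ((n : ℝ) - k + 1)))
          + (μ : ℝ) / (p * (1 - p) ^ (n - 1)) *
              (if k ≤ b + 1 then (k : ℝ) / n
               else ((b : ℝ) + 1) / n + (1 / (μ : ℝ)) * (harm (n - b - 1) - harm (n - k)))) := by
  classical
  have hq : (0:ℝ) < 1 - p := by linarith
  set good : (Fin μ → Fin n → Bool) → Prop :=
    fun X => ∃ i, k ≤ oneMax n (X i) with hgooddef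
  have hdrift : ∀ X : Fin μ → Fin n → Bool, ¬ good X →
      1 + ∑ X', muPlusOneKernel n μ p X X' * EA.gS n μ k p X' ≤ EA.gS n μ k p X := by
    intro X hX
    have hb2 : EA.bestF n μ X < k := by
      simp only [hgooddef] at hX
      rw [EA.good_iff hμ X] at hX
      omega
    exact EA.kernel_drift hn hμ hp0 hp1 hkn X hb2
  have hg0 : ∀ X, 0 ≤ EA.gS n μ k p X := fun X => EA.Gpot_nonneg hp0 hp1 _ _
  have hM : ∀ X, EA.gS n μ k p X ≤ EA.Tail n μ k p 0 := fun X =>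
    le_trans (EA.Gpot_le_Tail hp0 hp1 _ _) (EA.Tail_anti hp0 hp1 (Nat.zero_le _))
  have hK0 : ∀ X X' : Fin μ → Fin n → Bool, 0 ≤ muPlusOneKernel n μ p X X' :=
    fun X X' => EA.kernel_nonneg hp0 hp1 X X'
  have hdriftthm := drift_bound hchain hK0 good (EA.gS n μ k p) hg0 hdrift
    (EA.Tail n μ k p 0) hM
  have hTle := EA.Tail_zero_le hn hμ hp0 hp1 hk1 hkn hb
  set A : ℝ := (μ : ℝ) / (1 - p) ^ n *
      (2 * (k : ℝ) - 1 - ((n : ℝ) - k) * Real.log ((n : ℝ) / ((n : ℝ) - k + 1))) with hA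
  set B : ℝ := (μ : ℝ) / (p * (1 - p) ^ (n - 1)) *
      (if k ≤ b + 1 then (k : ℝ) / n
       else ((b : ℝ) + 1) / n + (1 / (μ : ℝ)) * (harm (n - b - 1) - harm (n - k))) with hB
  have hTAB : EA.Tail n μ k p 0 ≤ A + B := hTle
  have hAB : (0:ℝ) ≤ A + B := le_trans (EA.Tail_nonneg hp0 hp1 0) hTAB
  calc ∫⁻ ω, ((μ : ENNReal) + hitTime x good ω) ∂P
      = (μ : ENNReal) * P Set.univ + ∫⁻ ω, hitTime x good ω ∂P := by
        rw [MeasureTheory.lintegral_add_left measurable_const, MeasureTheory.lintegral_const]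
    _ = (μ : ENNReal) + ∫⁻ ω, hitTime x good ω ∂P := by
        rw [measure_univ, mul_one]
    _ ≤ (μ : ENNReal) + ENNReal.ofReal (EA.Tail n μ k p 0) := add_le_add_right hdriftthm _
    _ ≤ ENNReal.ofReal (μ : ℝ) + ENNReal.ofReal (A + B) := by
        refine add_le_add (le_of_eq ?_) (ENNReal.ofReal_le_ofReal hTAB)
        rw [ENNReal.ofReal_natCast]
    _ = ENNReal.ofReal ((μ : ℝ) + (A + B)) :=
        (ENNReal.ofReal_add (Nat.cast_nonneg μ) hAB).symm
    _ = ENNReal.ofReal ((μ : ℝ) + A + B) := by rw [add_assoc]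
end

section
/- (Additive drift, fixed-target upper bound.) Let k ∈ ℝ, let (X_t)_{t∈ℕ} be integrable real-valued random variables adapted to a filtration (F_t) with X_0 = x_0 ≥ k deterministic and with X_t ≥ B for some constant B and all t, and let T = inf{t : X_t ≤ k}. Suppose there is δ > 0 such that for all t, on the event {t < T}, X_t − E[X_{t+1} | F_t] ≥ δ almost surely. Then T is almost surely finite, X_T (the value of the process at time T) is integrable, and E[T] ≤ (x_0 − E[X_T]) / δ. -/
open MeasureTheory

/-- First time at which the process `X` takes a value `≤ k` (`⊤` if this never happens). -/
noncomputable def hitTimeLE {Ω : Type*} (X : ℕ → Ω → ℝ) (k : ℝ) (ω : Ω) : ℕ∞ :=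
  sInf {r : ℕ∞ | ∃ t : ℕ, r = (t : ℕ∞) ∧ X t ω ≤ k}

/-- The value `X_T` of the process at the (a.s. finite) stopping time `T`. -/
noncomputable def stoppedVal {Ω : Type*} (X : ℕ → Ω → ℝ) (T : Ω → ℕ∞) (ω : Ω) : ℝ :=
  X (T ω).toNat ω

open Filter

lemma lt_hitTimeLE_iff {Ω : Type*} (X : ℕ → Ω → ℝ) (k : ℝ) (ω : Ω) (n : ℕ) :
    (n : ℕ∞) < hitTimeLE X k ω ↔ ∀ s ≤ n, k < X s ω := by
  constructor
  · intro h s hs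
    by_contra hle
    push_neg at hle
    have h2 : hitTimeLE X k ω ≤ (s : ℕ∞) := sInf_le ⟨s, rfl, hle⟩
    have h3 : (s : ℕ∞) ≤ (n : ℕ∞) := by exact_mod_cast hs
    exact absurd (lt_of_lt_of_le (lt_of_lt_of_le h h2) h3) (lt_irrefl _)
  · intro h
    have : ((n+1 : ℕ) : ℕ∞) ≤ hitTimeLE X k ω := by
      apply le_sInf
      rintro r ⟨t, rfl, ht⟩
      have : n < t := by
        by_contra hc
        push_neg at hc
        exact absurd ht (not_le.mpr (h t hc))
      exact_mod_cast this
    calc (n : ℕ∞) < ((n+1:ℕ) : ℕ∞) := by exact_mod_cast Nat.lt_succ_self n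
      _ ≤ _ := this

lemma hitTimeLE_le_iff {Ω : Type*} (X : ℕ → Ω → ℝ) (k : ℝ) (ω : Ω) (n : ℕ) :
    hitTimeLE X k ω ≤ (n : ℕ∞) ↔ ∃ s ≤ n, X s ω ≤ k := by
  rw [← not_lt, lt_hitTimeLE_iff]
  push_neg
  rfl

lemma enat_toENNReal_eq_tsum (m : ℕ∞) :
    (m : ENNReal) = ∑' n : ℕ, if (n : ℕ∞) < m then 1 else 0 := by
  cases m with
  | top =>
    rw [ENat.toENNReal_top]
    have : ∀ n : ℕ, (if (n : ℕ∞) < ⊤ then (1:ENNReal) else 0) = 1 := by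
      intro n; simp [lt_top_iff_ne_top]
    simp only [this]
    exact (ENNReal.tsum_const_eq_top_of_ne_zero one_ne_zero).symm
  | coe j =>
    rw [ENat.toENNReal_coe]
    rw [tsum_eq_sum (s := Finset.range j) (by
      intro n hn
      simp only [Finset.mem_range, not_lt] at hn
      rw [if_neg]
      exact not_lt.mpr (by exact_mod_cast hn))]
    rw [Finset.sum_congr rfl (fun n hn => by
      rw [if_pos]
      exact_mod_cast Finset.mem_range.mp hn)]
    simp

/-- Additive drift, fixed-target upper bound: if the process is integrable, adapted,
bounded below by a constant `B`, starts at the deterministic value `x0 ≥ k`, and has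
additive drift at least `δ > 0` towards the target `k` before the hitting time
`T = inf{t : X_t ≤ k}`, then `T` is a.s. finite, `X_T` is integrable, and
`E[T] ≤ (x0 − E[X_T]) / δ`. -/
theorem additive_drift_fixed_target_upper
    {Ω : Type*} {m0 : MeasurableSpace Ω} (μ : Measure Ω) [IsProbabilityMeasure μ]
    (ℱ : Filtration ℕ m0) (X : ℕ → Ω → ℝ)
    (hadapt : Adapted ℱ X) (hint : ∀ t, Integrable (X t) μ)
    (k x0 B : ℝ) (hx0 : k ≤ x0) (hX0 : ∀ ω, X 0 ω = x0)
    (hB : ∀ t ω, B ≤ X t ω)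
    (δ : ℝ) (hδ : 0 < δ)
    (hdrift : ∀ t : ℕ, ∀ᵐ ω ∂μ, (t : ℕ∞) < hitTimeLE X k ω →
      δ ≤ X t ω - (μ[X (t + 1)|ℱ t]) ω) :
    (∀ᵐ ω ∂μ, hitTimeLE X k ω < ⊤) ∧
    Integrable (stoppedVal X (hitTimeLE X k)) μ ∧
    ∫⁻ ω, ((hitTimeLE X k ω : ℕ∞) : ENNReal) ∂μ
      ≤ ENNReal.ofReal ((x0 - ∫ ω, stoppedVal X (hitTimeLE X k) ω ∂μ) / δ) := by
  classical
  set T : Ω → ℕ∞ := hitTimeLE X k with hTdef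
  set A : ℕ → Set Ω := fun n => {ω | (n : ℕ∞) < T ω} with hAdef
  set Y : ℕ → Ω → ℝ := fun n ω => if T ω ≤ (n : ℕ∞) then stoppedVal X T ω else X n ω
    with hYdef
  -- measurability of A n in ℱ n
  have hA_meas : ∀ n, MeasurableSet[ℱ n] (A n) := by
    intro n
    have : A n = ⋂ s ∈ Finset.range (n+1), {ω | k < X s ω} := by
      ext ω
      simp only [hAdef, Set.mem_setOf_eq, Set.mem_iInter, Finset.mem_range,
        Nat.lt_succ_iff, hTdef, lt_hitTimeLE_iff]
    rw [this]
    apply MeasurableSet.biInter (Set.to_countable _)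
    intro s hs
    have hs' : s ≤ n := Nat.lt_succ_iff.mp (Finset.mem_range.mp hs)
    exact measurableSet_lt measurable_const
      (Measurable.mono (hadapt s) (ℱ.mono hs') le_rfl)
  have hA_meas0 : ∀ n, MeasurableSet (A n) := fun n => ℱ.le n _ (hA_meas n)
  -- recurrence for Y
  have hY0 : ∀ ω, Y 0 ω = X 0 ω := by
    intro ω
    simp only [hYdef]
    split_ifs with h
    · have : T ω = 0 := le_antisymm (by exact_mod_cast h) (zero_le)
      simp [stoppedVal, this]
    · rfl
  have hYrec : ∀ n ω, Y (n+1) ω = if ω ∈ A n then X (n+1) ω else Y n ω := by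
    intro n ω
    simp only [hAdef, Set.mem_setOf_eq, hYdef]
    by_cases h1 : T ω ≤ (n : ℕ∞)
    · rw [if_neg (not_lt.mpr h1), if_pos h1,
        if_pos (le_trans h1 (by exact_mod_cast Nat.le_succ n))]
    · rw [if_pos (not_le.mp h1)]
      by_cases h2 : T ω ≤ ((n+1 : ℕ) : ℕ∞)
      · rw [if_pos h2]
        have hle : ((n+1 : ℕ) : ℕ∞) ≤ T ω := by
          have := not_le.mp h1
          exact_mod_cast Order.add_one_le_of_lt this
        have heq : T ω = ((n+1 : ℕ) : ℕ∞) := le_antisymm h2 hle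
        show X (T ω).toNat ω = X (n+1) ω
        rw [heq, ENat.toNat_coe]
      · rw [if_neg h2]
  have hYpiece : ∀ n, Y (n+1) = fun ω => (A n).indicator (X (n+1)) ω
      + ((A n)ᶜ).indicator (Y n) ω := by
    intro n
    funext ω
    by_cases h : ω ∈ A n
    · rw [hYrec n ω, if_pos h, Set.indicator_of_mem h,
        Set.indicator_of_notMem (by simpa using h), add_zero]
    · rw [hYrec n ω, if_neg h, Set.indicator_of_notMem h,
        Set.indicator_of_mem (by simpa using h), zero_add]
  -- integrability and measurability of Y
  have hYint : ∀ n, Integrable (Y n) μ := by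
    intro n
    induction n with
    | zero => exact (hint 0).congr (Filter.Eventually.of_forall fun ω => (hY0 ω).symm)
    | succ n ih =>
      rw [hYpiece n]
      exact ((hint (n+1)).indicator (hA_meas0 n)).add (ih.indicator (hA_meas0 n).compl)
  have hYmeas : ∀ n, Measurable (Y n) := by
    intro n
    induction n with
    | zero =>
      have : Y 0 = X 0 := funext hY0
      rw [this]
      exact Measurable.mono (hadapt 0) (ℱ.le 0) le_rfl
    | succ n ih =>
      rw [hYpiece n]
      exact ((Measurable.mono (hadapt (n+1)) (ℱ.le (n+1)) le_rfl).indicator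
        (hA_meas0 n)).add (ih.indicator (hA_meas0 n).compl)
  -- lower bound
  have hsvB : ∀ ω, B ≤ stoppedVal X T ω := fun ω => hB _ ω
  have hYB : ∀ n ω, B ≤ Y n ω := by
    intro n ω
    simp only [hYdef]
    split_ifs
    · exact hsvB ω
    · exact hB n ω
  -- Y n = X n before hitting
  have hYeqX : ∀ n, ∀ ω ∈ A n, Y n ω = X n ω := by
    intro n ω hω
    simp only [hYdef]
    rw [if_neg (not_le.mpr hω)]
  -- one-step inequality
  have hstep : ∀ n, ∫ ω, Y (n+1) ω ∂μ ≤ ∫ ω, Y n ω ∂μ - δ * (μ (A n)).toReal := by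
    intro n
    have hsplit : ∀ (f : Ω → ℝ), Integrable f μ →
        ∫ ω in A n, f ω ∂μ + ∫ ω in (A n)ᶜ, f ω ∂μ = ∫ ω, f ω ∂μ :=
      fun f hf => integral_add_compl (hA_meas0 n) hf
    have h1 : ∫ ω in A n, Y (n+1) ω ∂μ = ∫ ω in A n, X (n+1) ω ∂μ :=
      setIntegral_congr_fun (hA_meas0 n) (fun ω hω => by rw [hYrec n ω, if_pos hω])
    have h2 : ∫ ω in (A n)ᶜ, Y (n+1) ω ∂μ = ∫ ω in (A n)ᶜ, Y n ω ∂μ :=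
      setIntegral_congr_fun (hA_meas0 n).compl (fun ω hω => by rw [hYrec n ω, if_neg hω])
    have h3 : ∫ ω in A n, X (n+1) ω ∂μ = ∫ ω in A n, (μ[X (n+1)|ℱ n]) ω ∂μ :=
      (setIntegral_condExp (ℱ.le n) (hint (n+1)) (hA_meas n)).symm
    have h4 : ∫ ω in A n, (μ[X (n+1)|ℱ n]) ω ∂μ ≤ ∫ ω in A n, (X n ω - δ) ∂μ := by
      apply integral_mono_ae integrable_condExp.restrict
        (((hint n).sub (integrable_const δ)).restrict)
      rw [Filter.EventuallyLE, ae_restrict_iff' (hA_meas0 n)]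
      filter_upwards [hdrift n] with ω h hω
      have := h hω
      simp only [Pi.sub_apply]
      linarith
    have h5 : ∫ ω in A n, (X n ω - δ) ∂μ
        = ∫ ω in A n, X n ω ∂μ - δ * (μ (A n)).toReal := by
      rw [integral_sub ((hint n).restrict) (integrable_const δ), setIntegral_const,
        smul_eq_mul]
      rw [measureReal_def]
      ring
    have h6 : ∫ ω in A n, X n ω ∂μ = ∫ ω in A n, Y n ω ∂μ :=
      setIntegral_congr_fun (hA_meas0 n) (fun ω hω => (hYeqX n ω hω).symm)
    have e1 := hsplit _ (hYint (n+1))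
    have e2 := hsplit _ (hYint n)
    linarith
  -- cumulated inequality
  have hsum : ∀ n, ∫ ω, Y n ω ∂μ + δ * (∑ t ∈ Finset.range n, (μ (A t)).toReal) ≤ x0 := by
    intro n
    induction n with
    | zero =>
      simp only [Finset.range_zero, Finset.sum_empty, mul_zero, add_zero]
      have : (fun ω => Y 0 ω) = fun _ => x0 := funext fun ω => (hY0 ω).trans (hX0 ω)
      rw [this, integral_const]
      simp
    | succ n ih =>
      have := hstep n
      rw [Finset.sum_range_succ]
      have hnn : (0:ℝ) ≤ (μ (A n)).toReal := ENNReal.toReal_nonneg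
      nlinarith
  have hYintB : ∀ n, B ≤ ∫ ω, Y n ω ∂μ := by
    intro n
    have h1 : ∫ (_ : Ω), B ∂μ ≤ ∫ ω, Y n ω ∂μ :=
      integral_mono (integrable_const B) (hYint n) (fun ω => hYB n ω)
    simpa using h1
  have hsum_nn : ∀ n, (0:ℝ) ≤ ∑ t ∈ Finset.range n, (μ (A t)).toReal :=
    fun n => Finset.sum_nonneg fun t _ => ENNReal.toReal_nonneg
  have hcrude : ∀ n, ∑ t ∈ Finset.range n, (μ (A t)).toReal ≤ (x0 - B) / δ := by
    intro n
    rw [le_div_iff₀ hδ]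
    have := hsum n
    have := hYintB n
    nlinarith
  -- a.s. finiteness
  have hfin : ∀ᵐ ω ∂μ, T ω < ⊤ := by
    have hsub : ∀ t : ℕ, (μ {ω | T ω = ⊤}).toReal ≤ (μ (A t)).toReal := by
      intro t
      apply ENNReal.toReal_mono (measure_ne_top μ _)
      apply measure_mono
      intro ω hω
      simp only [Set.mem_setOf_eq] at hω
      show (t : ℕ∞) < T ω
      rw [hω]
      exact lt_of_le_of_ne le_top (by simp)
    have hc0 : (μ {ω | T ω = ⊤}).toReal = 0 := by
      by_contra hc
      have hpos : 0 < (μ {ω | T ω = ⊤}).toReal :=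
        lt_of_le_of_ne ENNReal.toReal_nonneg (Ne.symm hc)
      obtain ⟨n, hn⟩ := exists_nat_gt (((x0 - B)/δ) / (μ {ω | T ω = ⊤}).toReal)
      have hle : (n : ℝ) * (μ {ω | T ω = ⊤}).toReal ≤ (x0 - B)/δ := by
        calc (n:ℝ) * (μ {ω | T ω = ⊤}).toReal
            = ∑ _t ∈ Finset.range n, (μ {ω | T ω = ⊤}).toReal := by
              rw [Finset.sum_const, Finset.card_range, nsmul_eq_mul]
          _ ≤ ∑ t ∈ Finset.range n, (μ (A t)).toReal :=
              Finset.sum_le_sum fun t _ => hsub t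
          _ ≤ _ := hcrude n
      rw [div_lt_iff₀ hpos] at hn
      linarith
    have hme : μ {ω | T ω = ⊤} = 0 := by
      rcases ENNReal.toReal_eq_zero_iff _ |>.mp hc0 with h | h
      · exact h
      · exact absurd h (measure_ne_top μ _)
    rw [ae_iff]
    convert hme using 2
    ext ω
    simp [lt_top_iff_ne_top]
  -- a.e. convergence of Y to stoppedVal
  have hconv : ∀ᵐ ω ∂μ, Tendsto (fun n => Y n ω) atTop (nhds (stoppedVal X T ω)) := by
    filter_upwards [hfin] with ω hω
    apply tendsto_atTop_of_eventually_const (i₀ := (T ω).toNat)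
    intro n hn
    simp only [hYdef]
    rw [if_pos]
    calc T ω = ((T ω).toNat : ℕ∞) := (ENat.coe_toNat hω.ne).symm
      _ ≤ (n : ℕ∞) := by exact_mod_cast hn
  have hsv_aesm : AEStronglyMeasurable (stoppedVal X T) μ := by
    have : AEMeasurable (stoppedVal X T) μ :=
      aemeasurable_of_tendsto_metrizable_ae atTop (fun n => (hYmeas n).aemeasurable) hconv
    exact this.aestronglyMeasurable
  -- Fatou
  have hfatou : ∫⁻ ω, ENNReal.ofReal (stoppedVal X T ω - B) ∂μ
      ≤ liminf (fun n => ENNReal.ofReal ((∫ ω, Y n ω ∂μ) - B)) atTop := by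
    have hmeas : ∀ n, Measurable fun ω => ENNReal.ofReal (Y n ω - B) :=
      fun n => ((hYmeas n).sub measurable_const).ennreal_ofReal
    have hF := lintegral_liminf_le hmeas (μ := μ) (u := atTop)
    have heq : ∫⁻ ω, ENNReal.ofReal (stoppedVal X T ω - B) ∂μ
        = ∫⁻ ω, liminf (fun n => ENNReal.ofReal (Y n ω - B)) atTop ∂μ := by
      apply lintegral_congr_ae
      filter_upwards [hconv] with ω hω
      have ht : Tendsto (fun n => ENNReal.ofReal (Y n ω - B)) atTop
          (nhds (ENNReal.ofReal (stoppedVal X T ω - B))) :=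
        (ENNReal.continuous_ofReal.tendsto _).comp (hω.sub tendsto_const_nhds)
      exact ht.liminf_eq.symm
    have hlin : ∀ n, ∫⁻ ω, ENNReal.ofReal (Y n ω - B) ∂μ
        = ENNReal.ofReal ((∫ ω, Y n ω ∂μ) - B) := by
      intro n
      have h := ofReal_integral_eq_lintegral_ofReal (μ := μ)
        (f := fun ω => Y n ω - B) ((hYint n).sub (integrable_const B))
        (Filter.Eventually.of_forall fun ω => sub_nonneg.mpr (hYB n ω))
      calc ∫⁻ ω, ENNReal.ofReal (Y n ω - B) ∂μ
          = ENNReal.ofReal (∫ ω, (Y n ω - B) ∂μ) := h.symm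
        _ = ENNReal.ofReal ((∫ ω, Y n ω ∂μ) - B) := by
            rw [integral_sub (hYint n) (integrable_const B), integral_const]
            simp
    calc ∫⁻ ω, ENNReal.ofReal (stoppedVal X T ω - B) ∂μ
        = ∫⁻ ω, liminf (fun n => ENNReal.ofReal (Y n ω - B)) atTop ∂μ := heq
      _ ≤ liminf (fun n => ∫⁻ ω, ENNReal.ofReal (Y n ω - B) ∂μ) atTop := hF
      _ = _ := by simp only [hlin]
  -- integrability of stoppedVal
  have hYle : ∀ n, ∫ ω, Y n ω ∂μ ≤ x0 := by
    intro n
    have h1 := hsum n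
    have h2 := hsum_nn n
    nlinarith
  have hbound : ∫⁻ ω, ENNReal.ofReal (stoppedVal X T ω - B) ∂μ
      ≤ ENNReal.ofReal (x0 - B) := by
    refine le_trans hfatou (Filter.liminf_le_of_frequently_le' ?_)
    apply Filter.Eventually.frequently
    apply Filter.Eventually.of_forall
    intro n
    exact ENNReal.ofReal_le_ofReal (by have := hYle n; linarith)
  have hsvB_int : Integrable (fun ω => stoppedVal X T ω - B) μ := by
    refine ⟨hsv_aesm.sub aestronglyMeasurable_const, ?_⟩
    rw [hasFiniteIntegral_iff_ofReal
      (Filter.Eventually.of_forall fun ω => sub_nonneg.mpr (hsvB ω))]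
    exact lt_of_le_of_lt hbound ENNReal.ofReal_lt_top
  have hsv_int : Integrable (stoppedVal X T) μ := by
    have h := hsvB_int.add (integrable_const B)
    refine h.congr (Filter.Eventually.of_forall fun ω => ?_)
    simp
  -- the sharp bound
  have hsharp : ∀ n, ∑ t ∈ Finset.range n, (μ (A t)).toReal
      ≤ (x0 - ∫ ω, stoppedVal X T ω ∂μ) / δ := by
    intro n
    set c := ∫ ω, stoppedVal X T ω ∂μ with hc
    set S := ∑ t ∈ Finset.range n, (μ (A t)).toReal with hS
    have hcB : ∫ ω, (stoppedVal X T ω - B) ∂μ = c - B := by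
      rw [integral_sub hsv_int (integrable_const B), integral_const]
      simp
      rfl
    have hYleS : ∀ m, n ≤ m → ∫ ω, Y m ω ∂μ ≤ x0 - δ * S := by
      intro m hm
      have h1 := hsum m
      have h2 : S ≤ ∑ t ∈ Finset.range m, (μ (A t)).toReal :=
        Finset.sum_le_sum_of_subset_of_nonneg
          (Finset.range_subset_range.mpr hm) (fun t _ _ => ENNReal.toReal_nonneg)
      nlinarith
    have hBS : B ≤ x0 - δ * S := le_trans (hYintB n) (hYleS n le_rfl)
    have h1 : ENNReal.ofReal (c - B) ≤ ENNReal.ofReal ((x0 - δ * S) - B) := by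
      calc ENNReal.ofReal (c - B)
          = ∫⁻ ω, ENNReal.ofReal (stoppedVal X T ω - B) ∂μ := by
            rw [← hcB]
            exact ofReal_integral_eq_lintegral_ofReal hsvB_int
              (Filter.Eventually.of_forall fun ω => sub_nonneg.mpr (hsvB ω))
        _ ≤ liminf (fun m => ENNReal.ofReal ((∫ ω, Y m ω ∂μ) - B)) atTop := hfatou
        _ ≤ ENNReal.ofReal ((x0 - δ * S) - B) := by
            apply Filter.liminf_le_of_frequently_le'
            apply Filter.Eventually.frequently
            filter_upwards [Filter.eventually_ge_atTop n] with m hm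
            exact ENNReal.ofReal_le_ofReal (by have := hYleS m hm; linarith)
    rw [ENNReal.ofReal_le_ofReal_iff (by linarith)] at h1
    rw [le_div_iff₀ hδ]
    linarith
  refine ⟨hfin, hsv_int, ?_⟩
  -- lintegral computation
  have hlint : ∫⁻ ω, ((T ω : ℕ∞) : ENNReal) ∂μ = ∑' n, μ (A n) := by
    have hpt : ∀ ω, ((T ω : ℕ∞) : ENNReal)
        = ∑' n : ℕ, (A n).indicator (fun _ => (1:ENNReal)) ω := by
      intro ω
      rw [enat_toENNReal_eq_tsum]
      congr 1
      funext n
      by_cases h : ω ∈ A n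
      · have h' : (n : ℕ∞) < T ω := h
        rw [if_pos h', Set.indicator_of_mem h]
      · have h' : ¬ (n : ℕ∞) < T ω := h
        rw [if_neg h', Set.indicator_of_notMem h]
    rw [lintegral_congr hpt,
      lintegral_tsum (fun n => (measurable_const.indicator (hA_meas0 n)).aemeasurable)]
    congr 1
    funext n
    rw [lintegral_indicator (hA_meas0 n)]
    simp
  rw [hlint]
  have hfs : ∀ s : Finset ℕ, ∑ t ∈ s, μ (A t)
      ≤ ENNReal.ofReal ((x0 - ∫ ω, stoppedVal X T ω ∂μ) / δ) := by
    intro s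
    obtain ⟨n, hn⟩ := s.exists_nat_subset_range
    calc ∑ t ∈ s, μ (A t) ≤ ∑ t ∈ Finset.range n, μ (A t) :=
          Finset.sum_le_sum_of_subset hn
      _ = ENNReal.ofReal (∑ t ∈ Finset.range n, (μ (A t)).toReal) := by
          rw [ENNReal.ofReal_sum_of_nonneg (fun t _ => ENNReal.toReal_nonneg)]
          exact Finset.sum_congr rfl fun t _ => (ENNReal.ofReal_toReal (measure_ne_top μ _)).symm
      _ ≤ _ := ENNReal.ofReal_le_ofReal (hsharp n)
  rw [ENNReal.tsum_eq_iSup_sum]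
  exact iSup_le hfs
end

section
/- (Multiplicative drift, fixed-target upper bound.) Let k' > 0 be a threshold, let (X_t)_{t∈ℕ} be integrable real-valued random variables adapted to a filtration (F_t) with X_0 = x_0 ≥ k' deterministic, and let T = inf{t : X_t < k'}. Suppose that X_t ≥ 0 for all t ≤ T, and that there is δ > 0 such that for all t, on the event {t < T}, X_t − E[X_{t+1} | F_t] ≥ δ·X_t almost surely. Then E[T] ≤ (1 + ln(x_0 / k')) / δ. -/
open MeasureTheory

/-- First time at which the process `X` takes a value strictly below `k'`
(`⊤` if this never happens). -/
noncomputable def hitTimeLT {Ω : Type*} (X : ℕ → Ω → ℝ) (k' : ℝ) (ω : Ω) : ℕ∞ :=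
  sInf {r : ℕ∞ | ∃ t : ℕ, r = (t : ℕ∞) ∧ X t ω < k'}

theorem hitTimeLT_lt_iff {Ω : Type*} (X : ℕ → Ω → ℝ) (k' : ℝ) (ω : Ω) (t : ℕ) :
    (t : ℕ∞) < hitTimeLT X k' ω ↔ ∀ s ≤ t, k' ≤ X s ω := by
  rw [hitTimeLT]
  constructor
  · intro h s hs
    by_contra hlt
    push_neg at hlt
    have h1 : sInf {r : ℕ∞ | ∃ s : ℕ, r = (s : ℕ∞) ∧ X s ω < k'} ≤ (s : ℕ∞) :=
      sInf_le ⟨s, rfl, hlt⟩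
    exact absurd (h.trans_le h1) (by exact_mod_cast not_lt.2 hs)
  · intro h
    have h1 : ((t + 1 : ℕ) : ℕ∞) ≤ sInf {r : ℕ∞ | ∃ s : ℕ, r = (s : ℕ∞) ∧ X s ω < k'} := by
      refine le_sInf ?_
      rintro r ⟨s, rfl, hXs⟩
      have : t < s := by
        by_contra hc
        exact absurd (h s (not_lt.1 hc)) (not_le.2 hXs)
      exact_mod_cast this
    exact lt_of_lt_of_le (by exact_mod_cast Nat.lt_succ_self t) h1

theorem hitTimeLT_le_iff {Ω : Type*} (X : ℕ → Ω → ℝ) (k' : ℝ) (ω : Ω) (t : ℕ) :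
    (t : ℕ∞) ≤ hitTimeLT X k' ω ↔ ∀ s < t, k' ≤ X s ω := by
  rw [hitTimeLT]
  constructor
  · intro h s hs
    by_contra hlt
    push_neg at hlt
    have h1 : sInf {r : ℕ∞ | ∃ s : ℕ, r = (s : ℕ∞) ∧ X s ω < k'} ≤ (s : ℕ∞) :=
      sInf_le ⟨s, rfl, hlt⟩
    exact absurd (h.trans h1) (by exact_mod_cast not_le.2 hs)
  · intro h
    refine le_sInf ?_
    rintro r ⟨s, rfl, hXs⟩
    have : t ≤ s := by
      by_contra hc
      exact absurd (h s (not_le.1 hc)) (not_le.2 hXs)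
    exact_mod_cast this

theorem enat_coe_ennreal_eq_tsum (a : ℕ∞) :
    ((a : ℕ∞) : ENNReal) = ∑' t : ℕ, if (t : ℕ∞) < a then (1 : ENNReal) else 0 := by
  cases a with
  | top =>
    have h1 : ∀ t : ℕ, ((t : ℕ∞) < (⊤ : ℕ∞)) := fun t => lt_of_le_of_ne le_top (by simp)
    simp only [h1, if_true]
    simp [ENNReal.tsum_const_eq_top_of_ne_zero]
  | coe n =>
    have : ∀ t : ℕ, ((t : ℕ∞) < (n : ℕ∞)) ↔ t < n := fun t => Nat.cast_lt
    simp only [this]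
    rw [tsum_eq_sum (s := Finset.range n) (by intro t ht; simp at ht; simp [ht, Nat.not_lt.2 ht])]
    simp [Finset.filter_true_of_mem (fun t ht => Finset.mem_range.1 ht)]

/-- Multiplicative drift, fixed-target upper bound: if the adapted integrable process starts at
the deterministic value `x0 ≥ k' > 0`, is nonnegative up to the hitting time
`T = inf{t : X_t < k'}`, and satisfies the multiplicative drift condition
`X_t − E[X_{t+1} | F_t] ≥ δ·X_t` before time `T`, then `E[T] ≤ (1 + ln(x0/k'))/δ`. -/
theorem multiplicative_drift_fixed_target_upper
    {Ω : Type*} {m0 : MeasurableSpace Ω} (μ : Measure Ω) [IsProbabilityMeasure μ]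
    (ℱ : Filtration ℕ m0) (X : ℕ → Ω → ℝ)
    (hadapt : Adapted ℱ X) (hint : ∀ t, Integrable (X t) μ)
    (k' x0 : ℝ) (hk' : 0 < k') (hx0 : k' ≤ x0) (hX0 : ∀ ω, X 0 ω = x0)
    (hnonneg : ∀ᵐ ω ∂μ, ∀ t : ℕ, (t : ℕ∞) ≤ hitTimeLT X k' ω → 0 ≤ X t ω)
    (δ : ℝ) (hδ : 0 < δ)
    (hdrift : ∀ t : ℕ, ∀ᵐ ω ∂μ, (t : ℕ∞) < hitTimeLT X k' ω →
      δ * X t ω ≤ X t ω - (μ[X (t + 1)|ℱ t]) ω) :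
    ∫⁻ ω, ((hitTimeLT X k' ω : ℕ∞) : ENNReal) ∂μ
      ≤ ENNReal.ofReal ((1 + Real.log (x0 / k')) / δ) := by
  classical
  have hXm : ∀ t, Measurable (X t) := fun t => (hadapt t).mono (ℱ.le t) le_rfl
  set A : ℕ → Set Ω := fun t => {ω | ∀ s ≤ t, k' ≤ X s ω} with hA
  have hAT : ∀ t ω, ω ∈ A t ↔ (t : ℕ∞) < hitTimeLT X k' ω := fun t ω =>
    (hitTimeLT_lt_iff X k' ω t).symm
  have hAmeasF : ∀ t, MeasurableSet[ℱ t] (A t) := by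
    intro t
    have hrw : A t = ⋂ s ∈ Finset.range (t + 1), X s ⁻¹' Set.Ici k' := by
      ext ω
      simp only [hA, Set.mem_setOf_eq, Set.mem_iInter, Finset.mem_range, Set.mem_preimage,
        Set.mem_Ici, Nat.lt_succ_iff]
    rw [hrw]
    refine Finset.measurableSet_biInter _ (fun s hs => ?_)
    have hs' : s ≤ t := Nat.lt_succ_iff.1 (Finset.mem_range.1 hs)
    exact ℱ.mono hs' _ (hadapt s measurableSet_Ici)
  have hAmeas : ∀ t, MeasurableSet (A t) := fun t => ℱ.le t _ (hAmeasF t)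
  have hAsub : ∀ t, A (t + 1) ⊆ A t := fun t ω hω s hs => hω s (hs.trans (Nat.le_succ t))
  have hAk : ∀ t ω, ω ∈ A t → k' ≤ X t ω := fun t ω hω => hω t le_rfl
  set Y : ℕ → Ω → ℝ := fun t => (A t).indicator (fun ω => 1 + Real.log (X t ω / k')) with hY
  have hYm : ∀ t, AEStronglyMeasurable (Y t) μ := fun t =>
    ((measurable_const.add (Real.measurable_log.comp ((hXm t).div_const k'))).indicator
      (hAmeas t)).aestronglyMeasurable
  have hYnonneg : ∀ t ω, 0 ≤ Y t ω := by
    intro t ω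
    by_cases hω : ω ∈ A t
    · simp only [hY, Set.indicator_of_mem hω]
      have h1 : (1:ℝ) ≤ X t ω / k' := (one_le_div hk').2 (hAk t ω hω)
      have := Real.log_nonneg h1
      linarith
    · simp [hY, Set.indicator_of_notMem hω]
  have hYle : ∀ t ω, Y t ω ≤ 1 + |X t ω| / k' := by
    intro t ω
    have h0 : (0:ℝ) ≤ 1 + |X t ω| / k' := by positivity
    by_cases hω : ω ∈ A t
    · simp only [hY, Set.indicator_of_mem hω]
      have hx : 0 < X t ω / k' := div_pos (hk'.trans_le (hAk t ω hω)) hk'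
      have hlog := Real.log_le_sub_one_of_pos hx
      have habs : X t ω / k' ≤ |X t ω| / k' := by
        gcongr
        exact le_abs_self _
      linarith
    · simp only [hY, Set.indicator_of_notMem hω]; exact h0
  have hYint : ∀ t, Integrable (Y t) μ := by
    intro t
    refine Integrable.mono ((integrable_const (1:ℝ)).add ((hint t).abs.div_const k')) (hYm t) ?_
    refine ae_of_all _ fun ω => ?_
    rw [Real.norm_eq_abs, abs_of_nonneg (hYnonneg t ω), Real.norm_eq_abs]
    exact (hYle t ω).trans (le_abs_self _)
  set φ : ℕ → Ω → ℝ := fun t => (A t).indicator (fun ω => (X t ω)⁻¹) with hφ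
  have hφmF : ∀ t, StronglyMeasurable[ℱ t] (φ t) :=
    fun t => (((hadapt t).inv).indicator (hAmeasF t)).stronglyMeasurable
  have hφbound : ∀ t ω, ‖φ t ω‖ ≤ k'⁻¹ := by
    intro t ω
    by_cases hω : ω ∈ A t
    · simp only [hφ, Set.indicator_of_mem hω]
      rw [Real.norm_eq_abs, abs_of_nonneg (inv_nonneg.2 (hk'.le.trans (hAk t ω hω)))]
      exact inv_anti₀ hk' (hAk t ω hω)
    · simp only [hφ, Set.indicator_of_notMem hω, norm_zero]
      exact inv_nonneg.2 hk'.le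
  have hφm0 : ∀ t, AEStronglyMeasurable (φ t) μ := fun t =>
    ((hφmF t).mono (ℱ.le t)).aestronglyMeasurable
  have key : ∀ t, δ * (μ (A t)).toReal ≤ (∫ ω, Y t ω ∂μ) - ∫ ω, Y (t+1) ω ∂μ := by
    intro t
    set c : Ω → ℝ := μ[X (t+1)|ℱ t] with hc
    have hcint : Integrable c μ := integrable_condExp
    have hpull : μ[φ t * X (t+1)|ℱ t] =ᵐ[μ] φ t * c :=
      condExp_stronglyMeasurable_mul_of_bound (ℱ.le t) (hφmF t) (hint (t+1)) k'⁻¹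
        (ae_of_all _ (hφbound t))
    have hφX1 : Integrable (fun ω => φ t ω * X (t+1) ω) μ :=
      (hint (t+1)).bdd_mul (hφm0 t) (ae_of_all _ (hφbound t))
    have hφc : Integrable (fun ω => φ t ω * c ω) μ :=
      hcint.bdd_mul (hφm0 t) (ae_of_all _ (hφbound t))
    have hφXt : Integrable (fun ω => φ t ω * X t ω) μ :=
      (hint t).bdd_mul (hφm0 t) (ae_of_all _ (hφbound t))
    have hinteq : ∫ ω, φ t ω * X (t+1) ω ∂μ = ∫ ω, φ t ω * c ω ∂μ := by
      have h1 : ∫ ω, (μ[φ t * X (t+1)|ℱ t]) ω ∂μ = ∫ ω, (φ t * X (t+1)) ω ∂μ :=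
        integral_condExp (ℱ.le t)
      have h2 : ∫ ω, (μ[φ t * X (t+1)|ℱ t]) ω ∂μ = ∫ ω, (φ t * c) ω ∂μ :=
        integral_congr_ae hpull
      simpa using h1.symm.trans h2
    have hb : δ * (μ (A t)).toReal ≤ ∫ ω, φ t ω * (X t ω - c ω) ∂μ := by
      have hφdiff : Integrable (fun ω => φ t ω * (X t ω - c ω)) μ :=
        ((hint t).sub hcint).bdd_mul (hφm0 t) (ae_of_all _ (hφbound t))
      have heq : δ * (μ (A t)).toReal = ∫ ω, (A t).indicator (fun _ => δ) ω ∂μ := by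
        rw [integral_indicator_const δ (hAmeas t)]
        simp [mul_comm, Measure.real]
      rw [heq]
      refine integral_mono_ae ((integrable_const δ).indicator (hAmeas t)) hφdiff ?_
      filter_upwards [hdrift t] with ω hd
      by_cases hω : ω ∈ A t
      · rw [Set.indicator_of_mem hω]
        have hXpos : 0 < X t ω := hk'.trans_le (hAk t ω hω)
        have hdr : δ * X t ω ≤ X t ω - c ω := hd ((hAT t ω).1 hω)
        simp only [hφ, Set.indicator_of_mem hω]
        calc δ = (X t ω)⁻¹ * (δ * X t ω) := by field_simp
          _ ≤ (X t ω)⁻¹ * (X t ω - c ω) :=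
            mul_le_mul_of_nonneg_left hdr (inv_nonneg.2 hXpos.le)
      · rw [Set.indicator_of_notMem hω]
        simp [hφ, Set.indicator_of_notMem hω]
    have hpt : ∀ᵐ ω ∂μ, φ t ω * X t ω - φ t ω * X (t+1) ω ≤ Y t ω - Y (t+1) ω := by
      filter_upwards [hnonneg] with ω hn
      by_cases hω : ω ∈ A t
      · have hXpos : 0 < X t ω := hk'.trans_le (hAk t ω hω)
        have hX1nonneg : 0 ≤ X (t+1) ω := by
          refine hn (t+1) ?_
          rw [hitTimeLT_le_iff]
          intro s hs
          exact hω s (Nat.lt_succ_iff.1 hs)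
        have h1 : φ t ω * X t ω = 1 := by
          simp only [hφ, Set.indicator_of_mem hω]
          exact inv_mul_cancel₀ hXpos.ne'
        rw [h1]
        simp only [hφ, hY, Set.indicator_of_mem hω]
        by_cases hω1 : ω ∈ A (t+1)
        · simp only [Set.indicator_of_mem hω1]
          have hX1pos : 0 < X (t+1) ω := hk'.trans_le (hAk (t+1) ω hω1)
          have hlog := Real.log_le_sub_one_of_pos (div_pos hX1pos hXpos)
          have hldiv : Real.log (X (t+1) ω / X t ω)
              = Real.log (X (t+1) ω / k') - Real.log (X t ω / k') := by
            rw [Real.log_div hX1pos.ne' hXpos.ne', Real.log_div hX1pos.ne' (ne_of_gt hk'),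
              Real.log_div hXpos.ne' (ne_of_gt hk')]
            ring
          have hdiv_eq : X (t+1) ω / X t ω = (X t ω)⁻¹ * X (t+1) ω := by
            rw [div_eq_mul_inv, mul_comm]
          rw [hldiv] at hlog
          rw [hdiv_eq] at hlog
          linarith
        · simp only [Set.indicator_of_notMem hω1]
          have hlog0 : 0 ≤ Real.log (X t ω / k') :=
            Real.log_nonneg ((one_le_div hk').2 (hAk t ω hω))
          have hmn : 0 ≤ (X t ω)⁻¹ * X (t+1) ω :=
            mul_nonneg (inv_nonneg.2 hXpos.le) hX1nonneg
          linarith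
      · have hω1 : ω ∉ A (t+1) := fun h => hω (hAsub t h)
        simp [hφ, hY, Set.indicator_of_notMem hω, Set.indicator_of_notMem hω1]
    calc δ * (μ (A t)).toReal ≤ ∫ ω, φ t ω * (X t ω - c ω) ∂μ := hb
      _ = (∫ ω, φ t ω * X t ω ∂μ) - ∫ ω, φ t ω * c ω ∂μ := by
          simp_rw [mul_sub]
          exact integral_sub hφXt hφc
      _ = (∫ ω, φ t ω * X t ω ∂μ) - ∫ ω, φ t ω * X (t+1) ω ∂μ := by rw [hinteq]
      _ = ∫ ω, (φ t ω * X t ω - φ t ω * X (t+1) ω) ∂μ := (integral_sub hφXt hφX1).symm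
      _ ≤ ∫ ω, (Y t ω - Y (t+1) ω) ∂μ :=
          integral_mono_ae (hφXt.sub hφX1) ((hYint t).sub (hYint (t+1))) hpt
      _ = (∫ ω, Y t ω ∂μ) - ∫ ω, Y (t+1) ω ∂μ := integral_sub (hYint t) (hYint (t+1))
  have hY0 : ∫ ω, Y 0 ω ∂μ = 1 + Real.log (x0 / k') := by
    have hA0 : A 0 = Set.univ := by
      ext ω
      simp only [hA, Set.mem_setOf_eq, Set.mem_univ, iff_true]
      intro s hs
      rw [Nat.le_zero.1 hs, hX0 ω]
      exact hx0
    have hYeq : Y 0 = fun _ => 1 + Real.log (x0 / k') := by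
      funext ω
      simp [hY, hA0, hX0 ω]
    rw [hYeq]
    simp
  have hlog0 : 0 ≤ Real.log (x0 / k') := Real.log_nonneg ((one_le_div hk').2 hx0)
  have hsum : ∀ n : ℕ, ∑ t ∈ Finset.range n, (μ (A t)).toReal
      ≤ (1 + Real.log (x0 / k')) / δ := by
    intro n
    have htel : δ * ∑ t ∈ Finset.range n, (μ (A t)).toReal
        ≤ (∫ ω, Y 0 ω ∂μ) - ∫ ω, Y n ω ∂μ := by
      rw [Finset.mul_sum]
      calc ∑ t ∈ Finset.range n, δ * (μ (A t)).toReal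
          ≤ ∑ t ∈ Finset.range n, ((∫ ω, Y t ω ∂μ) - ∫ ω, Y (t+1) ω ∂μ) :=
            Finset.sum_le_sum fun t _ => key t
        _ = (∫ ω, Y 0 ω ∂μ) - ∫ ω, Y n ω ∂μ :=
            Finset.sum_range_sub' (fun t => ∫ ω, Y t ω ∂μ) n
    have hYn : 0 ≤ ∫ ω, Y n ω ∂μ := integral_nonneg (hYnonneg n)
    rw [hY0] at htel
    rw [le_div_iff₀ hδ]
    linarith
  have htsum : ∑' t, μ (A t) ≤ ENNReal.ofReal ((1 + Real.log (x0 / k')) / δ) := by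
    rw [ENNReal.tsum_eq_iSup_sum]
    refine iSup_le fun s => ?_
    obtain ⟨n, hn⟩ : ∃ n, s ⊆ Finset.range n :=
      ⟨s.sup id + 1, fun x hx => Finset.mem_range.2 (Nat.lt_succ_of_le (Finset.le_sup (f := id) hx))⟩
    have h1 : ∑ t ∈ s, μ (A t) ≤ ∑ t ∈ Finset.range n, μ (A t) :=
      Finset.sum_le_sum_of_subset hn
    refine h1.trans ?_
    have hne : ∑ t ∈ Finset.range n, μ (A t) ≠ ⊤ :=
      (ENNReal.sum_lt_top.2 fun t _ => measure_lt_top μ _).ne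
    rw [ENNReal.le_ofReal_iff_toReal_le hne (by positivity)]
    rw [ENNReal.toReal_sum fun t _ => measure_ne_top μ _]
    exact hsum n
  calc ∫⁻ ω, ((hitTimeLT X k' ω : ℕ∞) : ENNReal) ∂μ
      = ∫⁻ ω, ∑' t : ℕ, (A t).indicator (fun _ => (1 : ENNReal)) ω ∂μ := by
        refine lintegral_congr fun ω => ?_
        rw [enat_coe_ennreal_eq_tsum]
        refine tsum_congr fun t => ?_
        rw [Set.indicator_apply]
        by_cases h : ω ∈ A t
        · simp [h, (hAT t ω).1 h]
        · have hnot : ¬ ((t : ℕ∞) < hitTimeLT X k' ω) := fun hh => h ((hAT t ω).2 hh)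
          simp [h, hnot]
    _ = ∑' t : ℕ, ∫⁻ ω, (A t).indicator (fun _ => (1 : ENNReal)) ω ∂μ :=
        lintegral_tsum fun t => (measurable_one.indicator (hAmeas t)).aemeasurable
    _ = ∑' t : ℕ, μ (A t) := by
        refine tsum_congr fun t => ?_
        rw [lintegral_indicator_const (hAmeas t)]
        simp
    _ ≤ ENNReal.ofReal ((1 + Real.log (x0 / k')) / δ) := htsum
end

section
/- (Variable drift, fixed-target upper bound.) Let k' > 0 be a threshold, let (X_t)_{t∈ℕ} be integrable real-valued random variables adapted to a filtration (F_t) with X_0 = x_0 ≥ k' deterministic, and let T = inf{t : X_t < k'}. Suppose that X_t ≥ 0 for all t ≤ T, and that there is a monotonically increasing function h : [k', ∞) → (0, ∞) such that for all t, on the event {t < T}, X_t − E[X_{t+1} | F_t] ≥ h(X_t) almost surely. Then E[T] ≤ k'/h(k') + ∫_{k'}^{x_0} 1/h(z) dz. -/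
open MeasureTheory

lemma le_hitTimeLT_iff {Ω : Type*} {X : ℕ → Ω → ℝ} {k' : ℝ} {ω : Ω} {j : ℕ} :
    (j : ℕ∞) ≤ hitTimeLT X k' ω ↔ ∀ t < j, k' ≤ X t ω := by
  constructor
  · intro hj t ht
    by_contra hlt
    have h1 : hitTimeLT X k' ω ≤ (t : ℕ∞) := sInf_le ⟨t, rfl, not_le.mp hlt⟩
    have h2 : (j : ℕ∞) ≤ (t : ℕ∞) := hj.trans h1
    exact absurd (by exact_mod_cast h2) (not_le.mpr ht)
  · intro H
    apply le_sInf
    rintro r ⟨t, rfl, hlt⟩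
    by_contra hr
    push_neg at hr
    have ht : t < j := by exact_mod_cast hr
    exact absurd hlt (not_lt.mpr (H t ht))

lemma lt_hitTimeLT_iff {Ω : Type*} {X : ℕ → Ω → ℝ} {k' : ℝ} {ω : Ω} {j : ℕ} :
    (j : ℕ∞) < hitTimeLT X k' ω ↔ ∀ t ≤ j, k' ≤ X t ω := by
  have : (j : ℕ∞) < hitTimeLT X k' ω ↔ ((j + 1 : ℕ) : ℕ∞) ≤ hitTimeLT X k' ω := by
    rw [← ENat.add_one_le_iff (by exact_mod_cast (ENat.coe_ne_top j))]
    push_cast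
    rfl
  rw [this, le_hitTimeLT_iff]
  constructor
  · intro H t ht; exact H t (Nat.lt_succ_of_le ht)
  · intro H t ht; exact H t (Nat.lt_succ_iff.mp ht)

set_option linter.unusedSectionVars false


noncomputable def gFun (h : ℝ → ℝ) (k' : ℝ) (x : ℝ) : ℝ :=
  if x < k' then x / h k' else k' / h k' + ∫ z in k'..x, 1 / h z

section gFun
variable {h : ℝ → ℝ} {k' : ℝ} (hk' : 0 < k')
  (hpos : ∀ z, k' ≤ z → 0 < h z) (hmono : MonotoneOn h (Set.Ici k'))

include hpos hmono

lemma invh_antitone : AntitoneOn (fun z => 1 / h z) (Set.Ici k') := by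
  intro a ha b hb hab
  exact one_div_le_one_div_of_le (hpos a ha) (hmono ha hb hab)

lemma invh_integrable {a b : ℝ} (ha : k' ≤ a) (hab : a ≤ b) :
    IntervalIntegrable (fun z => 1 / h z) MeasureTheory.volume a b := by
  apply AntitoneOn.intervalIntegrable
  apply (invh_antitone hpos hmono).mono
  rw [Set.uIcc_of_le hab]
  intro z hz
  exact le_trans ha hz.1

lemma invh_integral_ge {a b : ℝ} (ha : k' ≤ a) (hab : a ≤ b) :
    (b - a) / h b ≤ ∫ z in a..b, 1 / h z := by
  have hb : k' ≤ b := ha.trans hab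
  have h1 : ∫ z in a..b, (1 / h b) = (b - a) * (1 / h b) := by
    rw [intervalIntegral.integral_const, smul_eq_mul]
  rw [div_eq_mul_one_div, ← h1]
  apply intervalIntegral.integral_mono_on hab (intervalIntegrable_const)
    (invh_integrable hpos hmono ha hab)
  intro x hx
  exact one_div_le_one_div_of_le (hpos x (ha.trans hx.1)) (hmono (ha.trans hx.1) hb hx.2)

lemma invh_integral_le {a b : ℝ} (ha : k' ≤ a) (hab : a ≤ b) :
    (∫ z in a..b, 1 / h z) ≤ (b - a) / h a := by
  have h1 : ∫ z in a..b, (1 / h a) = (b - a) * (1 / h a) := by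
    rw [intervalIntegral.integral_const, smul_eq_mul]
  rw [div_eq_mul_one_div, ← h1]
  apply intervalIntegral.integral_mono_on hab (invh_integrable hpos hmono ha hab)
    intervalIntegrable_const
  intro x hx
  exact one_div_le_one_div_of_le (hpos a ha) (hmono ha (ha.trans hx.1) hx.1)

include hk'

lemma gFun_mono : Monotone (gFun h k') := by
  have hk'h : 0 < h k' := hpos k' le_rfl
  intro x1 x2 h12
  unfold gFun
  rcases lt_or_ge x1 k' with hx1 | hx1
  · rw [if_pos hx1]
    rcases lt_or_ge x2 k' with hx2 | hx2
    · rw [if_pos hx2]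
      exact div_le_div_of_nonneg_right h12 hk'h.le
    · rw [if_neg (not_lt.mpr hx2)]
      have h0 : (0:ℝ) ≤ ∫ z in k'..x2, 1 / h z :=
        le_trans (by positivity) ((div_nonneg (by linarith) (hpos x2 hx2).le).trans
          (invh_integral_ge hpos hmono le_rfl hx2))
      have : x1 / h k' ≤ k' / h k' := div_le_div_of_nonneg_right hx1.le hk'h.le
      linarith
  · rw [if_neg (not_lt.mpr hx1), if_neg (not_lt.mpr (hx1.trans h12))]
    have hadd : (∫ z in k'..x1, 1 / h z) + (∫ z in x1..x2, 1 / h z)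
        = ∫ z in k'..x2, 1 / h z :=
      intervalIntegral.integral_add_adjacent_intervals
        (invh_integrable hpos hmono le_rfl hx1) (invh_integrable hpos hmono hx1 h12)
    have h0 : (0:ℝ) ≤ ∫ z in x1..x2, 1 / h z :=
      le_trans (div_nonneg (by linarith) (hpos x2 (hx1.trans h12)).le)
        (invh_integral_ge hpos hmono hx1 h12)
    linarith

lemma gFun_nonneg {x : ℝ} (hx : 0 ≤ x) : 0 ≤ gFun h k' x := by
  have hk'h : 0 < h k' := hpos k' le_rfl
  unfold gFun
  rcases lt_or_ge x k' with h1 | h1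
  · rw [if_pos h1]; positivity
  · rw [if_neg (not_lt.mpr h1)]
    have h0 : (0:ℝ) ≤ ∫ z in k'..x, 1 / h z :=
      le_trans (div_nonneg (by linarith) (hpos x h1).le)
        (invh_integral_ge hpos hmono le_rfl h1)
    positivity

lemma gFun_abs_le (x : ℝ) : |gFun h k' x| ≤ |x| / h k' := by
  have hk'h : 0 < h k' := hpos k' le_rfl
  unfold gFun
  rcases lt_or_ge x k' with h1 | h1
  · rw [if_pos h1, abs_div, abs_of_pos hk'h]
  · rw [if_neg (not_lt.mpr h1)]
    have hx0 : 0 ≤ x := le_trans hk'.le h1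
    have h0 : (0:ℝ) ≤ ∫ z in k'..x, 1 / h z :=
      le_trans (div_nonneg (by linarith) (hpos x h1).le)
        (invh_integral_ge hpos hmono le_rfl h1)
    have hle : (∫ z in k'..x, 1 / h z) ≤ (x - k') / h k' :=
      invh_integral_le hpos hmono le_rfl h1
    rw [abs_of_nonneg (by positivity), abs_of_nonneg hx0]
    have : k' / h k' + (x - k') / h k' = x / h k' := by field_simp; ring
    linarith

omit hk' in
lemma gFun_key {x : ℝ} (hx : k' ≤ x) (y : ℝ) :
    (x - y) / h x ≤ gFun h k' x - gFun h k' y := by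
  have hk'h : 0 < h k' := hpos k' le_rfl
  have hhx : 0 < h x := hpos x hx
  have hhk'x : h k' ≤ h x := hmono (le_refl k' : k' ∈ Set.Ici k') hx hx
  rcases lt_or_ge y k' with hy | hy
  · rw [gFun, gFun, if_neg (not_lt.mpr hx), if_pos hy]
    have h1 : (x - k') / h x ≤ ∫ z in k'..x, 1 / h z :=
      invh_integral_ge hpos hmono le_rfl hx
    have h2 : (k' - y) / h x ≤ (k' - y) / h k' :=
      div_le_div_of_nonneg_left (by linarith) hk'h hhk'x
    have h3 : (x - y) / h x = (x - k') / h x + (k' - y) / h x := by ring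
    have h4 : k' / h k' - y / h k' = (k' - y) / h k' := by ring
    linarith
  · rw [gFun, gFun, if_neg (not_lt.mpr hx), if_neg (not_lt.mpr hy)]
    rcases le_or_gt y x with hyx | hyx
    · have hadd : (∫ z in k'..y, 1 / h z) + (∫ z in y..x, 1 / h z)
          = ∫ z in k'..x, 1 / h z :=
        intervalIntegral.integral_add_adjacent_intervals
          (invh_integrable hpos hmono le_rfl hy) (invh_integrable hpos hmono hy hyx)
      have h1 : (x - y) / h x ≤ ∫ z in y..x, 1 / h z :=
        invh_integral_ge hpos hmono hy hyx
      linarith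
    · have hadd : (∫ z in k'..x, 1 / h z) + (∫ z in x..y, 1 / h z)
          = ∫ z in k'..y, 1 / h z :=
        intervalIntegral.integral_add_adjacent_intervals
          (invh_integrable hpos hmono le_rfl hx) (invh_integrable hpos hmono hx hyx.le)
      have h1 : (∫ z in x..y, 1 / h z) ≤ (y - x) / h x :=
        invh_integral_le hpos hmono hx hyx.le
      have h2 : (x - y) / h x = -((y - x) / h x) := by ring
      linarith

end gFun

lemma enat_coe_eq_tsum (m : ℕ∞) :
    (m : ENNReal) = ∑' j : ℕ, (if (j : ℕ∞) < m then (1 : ENNReal) else 0) := by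
  induction m using ENat.recTopCoe with
  | top =>
    have h1 : ∀ j : ℕ, (if (j : ℕ∞) < (⊤ : ℕ∞) then (1 : ENNReal) else 0) = 1 := by
      intro j; rw [if_pos (lt_of_le_of_ne le_top (ENat.coe_ne_top j))]
    simp_rw [h1]
    rw [ENNReal.tsum_const_eq_top_of_ne_zero one_ne_zero]
    simp
  | coe N =>
    have h1 : ∑' j : ℕ, (if (j : ℕ∞) < ((N : ℕ) : ℕ∞) then (1 : ENNReal) else 0)
        = ∑ j ∈ Finset.range N, (if (j : ℕ∞) < ((N : ℕ) : ℕ∞) then (1 : ENNReal) else 0) := by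
      refine tsum_eq_sum fun j hj => ?_
      rw [if_neg]
      intro hc
      exact hj (Finset.mem_range.mpr (by exact_mod_cast hc))
    rw [h1, Finset.sum_congr rfl (fun j hj => if_pos (by exact_mod_cast Finset.mem_range.mp hj))]
    simp

/-- Variable drift, fixed-target upper bound: if the adapted integrable process starts at the
deterministic value `x0 ≥ k' > 0`, is nonnegative up to the hitting time
`T = inf{t : X_t < k'}`, and `h : [k',∞) → (0,∞)` is monotonically increasing with
`X_t − E[X_{t+1} | F_t] ≥ h(X_t)` before time `T`, then
`E[T] ≤ k'/h(k') + ∫_{k'}^{x0} 1/h(z) dz`. -/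
theorem variable_drift_fixed_target_upper
    {Ω : Type*} {m0 : MeasurableSpace Ω} (μ : Measure Ω) [IsProbabilityMeasure μ]
    (ℱ : Filtration ℕ m0) (X : ℕ → Ω → ℝ)
    (hadapt : Adapted ℱ X) (hint : ∀ t, Integrable (X t) μ)
    (k' x0 : ℝ) (hk' : 0 < k') (hx0 : k' ≤ x0) (hX0 : ∀ ω, X 0 ω = x0)
    (hnonneg : ∀ᵐ ω ∂μ, ∀ t : ℕ, (t : ℕ∞) ≤ hitTimeLT X k' ω → 0 ≤ X t ω)
    (h : ℝ → ℝ) (hpos : ∀ z, k' ≤ z → 0 < h z) (hmono : MonotoneOn h (Set.Ici k'))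
    (hdrift : ∀ t : ℕ, ∀ᵐ ω ∂μ, (t : ℕ∞) < hitTimeLT X k' ω →
      h (X t ω) ≤ X t ω - (μ[X (t + 1)|ℱ t]) ω) :
    ∫⁻ ω, ((hitTimeLT X k' ω : ℕ∞) : ENNReal) ∂μ
      ≤ ENNReal.ofReal (k' / h k' + ∫ z in k'..x0, 1 / h z) := by
  classical
  have hk'h : 0 < h k' := hpos k' le_rfl
  set T : Ω → ℕ∞ := hitTimeLT X k' with hTdef
  set g : ℝ → ℝ := gFun h k' with hgdef
  set Y : ℕ → Ω → ℝ := fun t ω => g (X t ω) with hYdef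
  set A : ℕ → Set Ω := fun j => {ω | (j : ℕ∞) < T ω} with hAdef
  -- measurability of A j
  have hA_eq : ∀ j, A j = ⋂ t ∈ Finset.Iic j, {ω | k' ≤ X t ω} := by
    intro j
    ext ω
    simp only [hAdef, Set.mem_setOf_eq, Set.mem_iInter, Finset.mem_Iic]
    exact lt_hitTimeLT_iff
  have hAmeas : ∀ j, MeasurableSet[ℱ j] (A j) := by
    intro j
    rw [hA_eq j]
    refine Finset.measurableSet_biInter _ (fun t ht => ?_)
    exact measurableSet_le measurable_const
      (((hadapt t)).mono (ℱ.mono (Finset.mem_Iic.mp ht)) le_rfl)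
  have hAmeas0 : ∀ j, MeasurableSet (A j) := fun j => (ℱ.le j) _ (hAmeas j)
  -- measurability & integrability of Y
  have hgmono : Monotone g := gFun_mono hk' hpos hmono
  have hXmF : ∀ t, Measurable[ℱ t] (X t) := fun t => (hadapt t)
  have hYmF : ∀ t, Measurable[ℱ t] (Y t) := fun t => hgmono.measurable.comp (hXmF t)
  have hYm : ∀ t, Measurable (Y t) := fun t => (hYmF t).mono (ℱ.le t) le_rfl
  have hYint : ∀ t, Integrable (Y t) μ := by
    intro t
    refine ((hint t).abs.div_const (h k')).mono' (hYm t).aestronglyMeasurable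
      (Filter.Eventually.of_forall fun ω => ?_)
    simpa using gFun_abs_le hk' hpos hmono (X t ω)
  -- h' : measurable version of h ∘ X n on A n
  set h' : ℝ → ℝ := fun z => h (max z k') with hh'def
  have hh'mono : Monotone h' := by
    intro a b hab
    exact hmono (le_max_right a k') (le_max_right b k') (max_le_max hab le_rfl)
  have hh'eq : ∀ z, k' ≤ z → h' z = h z := by
    intro z hz; simp [hh'def, max_eq_left hz]
  -- the key one-step estimate
  have key : ∀ n : ℕ, (μ (A n)).toReal
      ≤ ∫ ω, Set.indicator (A n) (fun ω => Y n ω - Y (n + 1) ω) ω ∂μ := by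
    intro n
    set c : Ω → ℝ := (A n).indicator (fun ω => (h' (X n ω))⁻¹) with hcdef
    have hcmF : Measurable[ℱ n] c :=
      ((hh'mono.measurable.comp (hXmF n)).inv).indicator (hAmeas n)
    have hcm : Measurable c := hcmF.mono (ℱ.le n) le_rfl
    have hXnA : ∀ ω ∈ A n, k' ≤ X n ω := fun ω hω => lt_hitTimeLT_iff.mp hω n le_rfl
    have hc_nonneg : ∀ ω, 0 ≤ c ω := by
      intro ω
      rcases Classical.em (ω ∈ A n) with hω | hω
      · rw [hcdef, Set.indicator_of_mem hω]
        exact (inv_nonneg).mpr (by rw [hh'eq _ (hXnA ω hω)]; exact (hpos _ (hXnA ω hω)).le)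
      · rw [hcdef, Set.indicator_of_notMem hω]
    have hc_bdd : ∀ ω, ‖c ω‖ ≤ (h k')⁻¹ := by
      intro ω
      rw [Real.norm_eq_abs, abs_of_nonneg (hc_nonneg ω)]
      rcases Classical.em (ω ∈ A n) with hω | hω
      · rw [hcdef, Set.indicator_of_mem hω, hh'eq _ (hXnA ω hω)]
        exact inv_anti₀ hk'h (hmono (le_refl k' : k' ∈ Set.Ici k') (hXnA ω hω) (hXnA ω hω))
      · rw [hcdef, Set.indicator_of_notMem hω]; positivity
    -- integrabilities
    have hintsub : Integrable (fun ω => X n ω - (μ[X (n + 1)|ℱ n]) ω) μ :=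
      (hint n).sub integrable_condExp
    have hint1 : Integrable (fun ω => c ω * (X n ω - (μ[X (n + 1)|ℱ n]) ω)) μ :=
      hintsub.bdd_mul hcm.aestronglyMeasurable (Filter.Eventually.of_forall hc_bdd)
    have hint2 : Integrable (fun ω => c ω * X n ω) μ :=
      (hint n).bdd_mul hcm.aestronglyMeasurable (Filter.Eventually.of_forall hc_bdd)
    have hint3 : Integrable (fun ω => c ω * X (n + 1) ω) μ :=
      (hint (n + 1)).bdd_mul hcm.aestronglyMeasurable (Filter.Eventually.of_forall hc_bdd)
    have hint4 : Integrable (fun ω => c ω * (μ[X (n + 1)|ℱ n]) ω) μ :=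
      integrable_condExp.bdd_mul hcm.aestronglyMeasurable (Filter.Eventually.of_forall hc_bdd)
    have hint5 : Integrable (Set.indicator (A n) (fun ω => Y n ω - Y (n + 1) ω)) μ :=
      ((hYint n).sub (hYint (n + 1))).indicator (hAmeas0 n)
    -- step A
    have stepA : (μ (A n)).toReal
        ≤ ∫ ω, c ω * (X n ω - (μ[X (n + 1)|ℱ n]) ω) ∂μ := by
      have h0 : (μ (A n)).toReal = ∫ ω, Set.indicator (A n) (fun _ => (1:ℝ)) ω ∂μ := by
        rw [integral_indicator (hAmeas0 n), setIntegral_const, smul_eq_mul, mul_one, measureReal_def]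
      rw [h0]
      refine integral_mono_ae ((integrable_const (1:ℝ)).indicator (hAmeas0 n)) hint1 ?_
      filter_upwards [hdrift n] with ω hd
      rcases Classical.em (ω ∈ A n) with hω | hω
      · rw [Set.indicator_of_mem hω, hcdef, Set.indicator_of_mem hω,
          hh'eq _ (hXnA ω hω)]
        have hXk : k' ≤ X n ω := hXnA ω hω
        have hdd : h (X n ω) ≤ X n ω - (μ[X (n + 1)|ℱ n]) ω := hd hω
        have hhpos : 0 < h (X n ω) := hpos _ hXk
        calc (1:ℝ) = (h (X n ω))⁻¹ * h (X n ω) := (inv_mul_cancel₀ hhpos.ne').symm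
        _ ≤ (h (X n ω))⁻¹ * (X n ω - (μ[X (n + 1)|ℱ n]) ω) :=
            mul_le_mul_of_nonneg_left hdd (by positivity)
      · rw [Set.indicator_of_notMem hω, hcdef, Set.indicator_of_notMem hω, zero_mul]
    -- step B/C : replace condexp
    have stepC : ∫ ω, c ω * (μ[X (n + 1)|ℱ n]) ω ∂μ = ∫ ω, c ω * X (n + 1) ω ∂μ := by
      have hpull := condExp_mul_of_stronglyMeasurable_left (m := ℱ n) (μ := μ)
        (hcmF.stronglyMeasurable) hint3 (hint (n + 1))
      calc ∫ ω, c ω * (μ[X (n + 1)|ℱ n]) ω ∂μ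
          = ∫ ω, (μ[(fun ω => c ω * X (n + 1) ω)|ℱ n]) ω ∂μ := by
            refine (integral_congr_ae ?_).symm
            exact hpull.trans (by rfl)
        _ = ∫ ω, c ω * X (n + 1) ω ∂μ := integral_condExp (ℱ.le n)
    -- step D
    have stepD : (∫ ω, c ω * (X n ω - X (n + 1) ω) ∂μ)
        ≤ ∫ ω, Set.indicator (A n) (fun ω => Y n ω - Y (n + 1) ω) ω ∂μ := by
      refine integral_mono_ae
        (((hint n).sub (hint (n + 1))).bdd_mul hcm.aestronglyMeasurable
          (Filter.Eventually.of_forall hc_bdd)) hint5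
        (Filter.Eventually.of_forall fun ω => ?_)
      show c ω * (X n ω - X (n + 1) ω) ≤ (A n).indicator (fun ω => Y n ω - Y (n + 1) ω) ω
      rcases Classical.em (ω ∈ A n) with hω | hω
      · have hcc : c ω = (h (X n ω))⁻¹ := by
          rw [hcdef, Set.indicator_of_mem hω, hh'eq _ (hXnA ω hω)]
        rw [hcc, Set.indicator_of_mem hω]
        have hkey := gFun_key hpos hmono (hXnA ω hω) (X (n + 1) ω)
        rw [div_eq_mul_inv, mul_comm] at hkey
        exact hkey
      · have hcc : c ω = 0 := by rw [hcdef, Set.indicator_of_notMem hω]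
        rw [hcc, Set.indicator_of_notMem hω, zero_mul]
    -- chain
    calc (μ (A n)).toReal
        ≤ ∫ ω, c ω * (X n ω - (μ[X (n + 1)|ℱ n]) ω) ∂μ := stepA
      _ = (∫ ω, c ω * X n ω ∂μ) - ∫ ω, c ω * (μ[X (n + 1)|ℱ n]) ω ∂μ := by
          simp_rw [mul_sub]
          exact integral_sub hint2 hint4
      _ = (∫ ω, c ω * X n ω ∂μ) - ∫ ω, c ω * X (n + 1) ω ∂μ := by rw [stepC]
      _ = ∫ ω, c ω * (X n ω - X (n + 1) ω) ∂μ := by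
          simp_rw [mul_sub]
          exact (integral_sub hint2 hint3).symm
      _ ≤ _ := stepD
  -- a.e. partial-sum bound
  have hae : ∀ᵐ ω ∂μ, ∀ n : ℕ,
      (∑ j ∈ Finset.range n, (A j).indicator (fun ω => Y j ω - Y (j + 1) ω) ω) ≤ Y 0 ω := by
    filter_upwards [hnonneg] with ω hω
    have hYnn : ∀ n : ℕ, (n : ℕ∞) ≤ T ω → 0 ≤ Y n ω :=
      fun n hn => gFun_nonneg hk' hpos hmono (hω n hn)
    have hW : ∀ n : ℕ, (∑ j ∈ Finset.range n, (A j).indicator (fun ω => Y j ω - Y (j + 1) ω) ω)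
        + (if (n : ℕ∞) ≤ T ω then Y n ω else 0) ≤ Y 0 ω := by
      intro n
      induction n with
      | zero =>
        simp only [Finset.range_zero, Finset.sum_empty, zero_add, Nat.cast_zero]
        rw [if_pos zero_le]
      | succ n ih =>
        rw [Finset.sum_range_succ]
        rcases Classical.em ((n : ℕ∞) < T ω) with hlt | hlt
        · have hmem : ω ∈ A n := hlt
          have hn1 : ((n + 1 : ℕ) : ℕ∞) ≤ T ω := by
            rw [show ((n + 1 : ℕ) : ℕ∞) = (n : ℕ∞) + 1 by push_cast; rfl]
            exact (ENat.add_one_le_iff (ENat.coe_ne_top n)).mpr hlt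
          rw [if_pos hlt.le] at ih
          rw [Set.indicator_of_mem hmem, if_pos hn1]
          linarith
        · have hmem : ω ∉ A n := hlt
          have hn1 : ¬ ((n + 1 : ℕ) : ℕ∞) ≤ T ω := by
            intro hc
            apply hlt
            refine lt_of_lt_of_le ?_ hc
            exact_mod_cast Nat.lt_succ_self n
          rw [Set.indicator_of_notMem hmem, if_neg hn1, add_zero, add_zero]
          have hextra : 0 ≤ (if (n : ℕ∞) ≤ T ω then Y n ω else 0) := by
            split
            · exact hYnn n ‹_›
            · exact le_rfl
          linarith
    intro n
    have hextra : 0 ≤ (if (n : ℕ∞) ≤ T ω then Y n ω else 0) := by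
      split
      · exact hYnn n ‹_›
      · exact le_rfl
    linarith [hW n]
  -- partial sums of measures bounded by g x0
  have hpartial : ∀ n : ℕ, (∑ j ∈ Finset.range n, (μ (A j)).toReal) ≤ g x0 := by
    intro n
    have h1 : (∑ j ∈ Finset.range n, (μ (A j)).toReal)
        ≤ ∑ j ∈ Finset.range n, ∫ ω, (A j).indicator (fun ω => Y j ω - Y (j + 1) ω) ω ∂μ :=
      Finset.sum_le_sum fun j _ => key j
    have h2 : (∑ j ∈ Finset.range n, ∫ ω, (A j).indicator (fun ω => Y j ω - Y (j + 1) ω) ω ∂μ)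
        = ∫ ω, ∑ j ∈ Finset.range n, (A j).indicator (fun ω => Y j ω - Y (j + 1) ω) ω ∂μ :=
      (integral_finset_sum _ fun j _ =>
        ((hYint j).sub (hYint (j + 1))).indicator (hAmeas0 j)).symm
    have h3 : (∫ ω, ∑ j ∈ Finset.range n, (A j).indicator (fun ω => Y j ω - Y (j + 1) ω) ω ∂μ)
        ≤ ∫ ω, Y 0 ω ∂μ := by
      refine integral_mono_ae (integrable_finset_sum _ fun j _ =>
        ((hYint j).sub (hYint (j + 1))).indicator (hAmeas0 j)) (hYint 0) ?_
      filter_upwards [hae] with ω hω using hω n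
    have h4 : (∫ ω, Y 0 ω ∂μ) = g x0 := by
      have hY0 : Y 0 = fun _ => g x0 := funext fun ω => by rw [hYdef]; simp [hX0 ω]
      rw [hY0, integral_const]
      simp
    linarith
  -- tsum bound
  have htsum : (∑' j : ℕ, μ (A j)) ≤ ENNReal.ofReal (g x0) := by
    rw [ENNReal.tsum_eq_iSup_sum]
    refine iSup_le fun s => ?_
    obtain ⟨n, hn⟩ : ∃ n : ℕ, s ⊆ Finset.range n :=
      ⟨s.sup id + 1, fun x hx => Finset.mem_range.mpr (Nat.lt_succ_of_le (Finset.le_sup (f := id) hx))⟩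
    calc (∑ j ∈ s, μ (A j)) ≤ ∑ j ∈ Finset.range n, μ (A j) :=
        Finset.sum_le_sum_of_subset hn
      _ = ENNReal.ofReal (∑ j ∈ Finset.range n, (μ (A j)).toReal) := by
        rw [ENNReal.ofReal_sum_of_nonneg fun j _ => ENNReal.toReal_nonneg]
        exact Finset.sum_congr rfl fun j _ => (ENNReal.ofReal_toReal (measure_ne_top μ _)).symm
      _ ≤ ENNReal.ofReal (g x0) := ENNReal.ofReal_le_ofReal (hpartial n)
  -- layer cake
  have hlayer : (∫⁻ ω, ((T ω : ℕ∞) : ENNReal) ∂μ) = ∑' j : ℕ, μ (A j) := by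
    calc (∫⁻ ω, ((T ω : ℕ∞) : ENNReal) ∂μ)
        = ∫⁻ ω, ∑' j : ℕ, (A j).indicator (fun _ => (1 : ENNReal)) ω ∂μ := by
          refine lintegral_congr fun ω => ?_
          rw [enat_coe_eq_tsum]
          refine tsum_congr fun j => ?_
          by_cases hj : ω ∈ A j
          · rw [Set.indicator_of_mem hj]; exact if_pos hj
          · rw [Set.indicator_of_notMem hj]; exact if_neg hj
      _ = ∑' j : ℕ, ∫⁻ ω, (A j).indicator (fun _ => (1 : ENNReal)) ω ∂μ :=
          lintegral_tsum fun j => (measurable_one.indicator (hAmeas0 j)).aemeasurable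
      _ = ∑' j : ℕ, μ (A j) := tsum_congr fun j => lintegral_indicator_one (hAmeas0 j)
  calc (∫⁻ ω, ((hitTimeLT X k' ω : ℕ∞) : ENNReal) ∂μ) = ∑' j : ℕ, μ (A j) := hlayer
    _ ≤ ENNReal.ofReal (g x0) := htsum
    _ = ENNReal.ofReal (k' / h k' + ∫ z in k'..x0, 1 / h z) := by
      rw [hgdef]
      unfold gFun
      rw [if_neg (not_lt.mpr hx0)]
end
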